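/- arXiv:2407.06289 — 5 statements merged into one kernel-verified Lean document; each statement's English description precedes it below -/
import Mathlib

section
/- Let p be an odd prime and ξ₃, ξ₄ ∈ ℚₚ/ℤₚ (identified with representatives of negative valuation or 0). Define f(x₂,x₃) := ∫_{ℤₚ} e^{2πi{(ξ₃x₂+ξ₄x₃)u + ξ₄x₂u²/2}ₚ} du. Then ∫_{ℤₚ²} |f(x₂,x₃)|² dx₂dx₃ = max{|ξ₃|ₚ, |ξ₄|ₚ}^{−1}. -/
open MeasureTheory
open scoped Classical
open scoped ENNReal

variable {p : ℕ} [Fact p.Prime]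



lemma e_cont (e : ℚ_[p] → ℂ)
    (he_add : ∀ x y, e (x + y) = e x * e y)
    (he_ker : ∀ x, e x = 1 ↔ ‖x‖ ≤ 1) : Continuous e := by
  rw [continuous_iff_continuousAt]
  intro x
  have : ∀ y ∈ Metric.ball x 1, e y = e x := by
    intro y hy
    have h1 : ‖y - x‖ ≤ 1 := le_of_lt (by simpa [dist_eq_norm] using hy)
    have : e y = e x * e (y - x) := by rw [← he_add]; ring_nf
    rw [this, (he_ker _).2 h1, mul_one]
  exact ContinuousAt.congr (continuousAt_const (y := e x))
    (Filter.eventuallyEq_of_mem (Metric.ball_mem_nhds x one_pos)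
      (fun y hy => (this y hy).symm))


lemma e_conj (e : ℚ_[p] → ℂ)
    (he_add : ∀ x y, e (x + y) = e x * e y)
    (he_abs : ∀ x, ‖e x‖ = 1)
    (he_ker : ∀ x, e x = 1 ↔ ‖x‖ ≤ 1) (x : ℚ_[p]) :
    (starRingEnd ℂ) (e x) = e (-x) := by
  have h1 : e x * e (-x) = 1 := by
    rw [← he_add, add_neg_cancel, (he_ker 0).2 (by norm_num)]
  have h2 : (starRingEnd ℂ) (e x) * e x = 1 := by
    have := Complex.mul_conj' (e x)
    rw [he_abs] at this
    rw [mul_comm] at this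
    simpa using this
  calc (starRingEnd ℂ) (e x) = (starRingEnd ℂ) (e x) * (e x * e (-x)) := by rw [h1, mul_one]
    _ = ((starRingEnd ℂ) (e x) * e x) * e (-x) := by ring
    _ = e (-x) := by rw [h2, one_mul]


-- translation invariance of the integral
lemma int_shift [MeasurableSpace ℤ_[p]] [BorelSpace ℤ_[p]]
    (μ : Measure ℤ_[p])
    (hμ_inv : ∀ (a : ℤ_[p]) (s : Set ℤ_[p]), μ ((a + ·) ⁻¹' s) = μ s)
    (a : ℤ_[p]) (f : ℤ_[p] → ℂ) :
    ∫ u, f (a + u) ∂μ = ∫ u, f u ∂μ := by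
  have hmeas : MeasurePreserving (fun u : ℤ_[p] => a + u) μ μ := by
    refine ⟨by fun_prop, ?_⟩
    ext s hs
    rw [Measure.map_apply (by fun_prop : Measurable (fun u : ℤ_[p] => a + u)) hs]
    exact hμ_inv a s
  exact hmeas.integral_comp ((Homeomorph.addLeft a).toMeasurableEquiv.measurableEmbedding) f

-- norms > 1 are ≥ p
lemma norm_ge_p {c : ℚ_[p]} (hc : 1 < ‖c‖) : (p : ℝ) ≤ ‖c‖ := by
  have hc0 : c ≠ 0 := by rintro rfl; simp at hc; linarith
  rw [Padic.norm_eq_zpow_neg_valuation hc0] at hc ⊢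
  have hp1 : (1:ℝ) < (p:ℝ) := by exact_mod_cast (Fact.out : p.Prime).one_lt
  have : (0:ℤ) < -c.valuation := by
    by_contra h
    push_neg at h
    have := zpow_le_one_of_nonpos₀ (by linarith : (1:ℝ) ≤ (p:ℝ)) (by linarith : -c.valuation ≤ 0)
    linarith
  calc (p:ℝ) = (p:ℝ) ^ (1:ℤ) := by simp
    _ ≤ (p:ℝ) ^ (-c.valuation) := by
        apply zpow_le_zpow_right₀ (le_of_lt hp1) (by omega)

lemma char_integral [MeasurableSpace ℤ_[p]] [BorelSpace ℤ_[p]]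
    (μ : Measure ℤ_[p])
    (hμ_inv : ∀ (a : ℤ_[p]) (s : Set ℤ_[p]), μ ((a + ·) ⁻¹' s) = μ s)
    (hμ_norm : μ Set.univ = 1)
    (e : ℚ_[p] → ℂ)
    (he_add : ∀ x y, e (x + y) = e x * e y)
    (he_ker : ∀ x, e x = 1 ↔ ‖x‖ ≤ 1)
    (c : ℚ_[p]) :
    ∫ u : ℤ_[p], e (c * (u : ℚ_[p])) ∂μ = if ‖c‖ ≤ 1 then 1 else 0 := by
  haveI : IsProbabilityMeasure μ := ⟨hμ_norm⟩
  by_cases hc : ‖c‖ ≤ 1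
  · simp only [if_pos hc]
    have : ∀ u : ℤ_[p], e (c * (u:ℚ_[p])) = 1 := fun u => (he_ker _).2 <| by
      calc ‖c * (u:ℚ_[p])‖ = ‖c‖ * ‖(u:ℚ_[p])‖ := norm_mul _ _
        _ ≤ 1 * 1 := by
            apply mul_le_mul hc u.2 (norm_nonneg _) zero_le_one
        _ = 1 := one_mul 1
    simp [this]
  · simp only [if_neg hc]
    push_neg at hc
    have hc0 : c ≠ 0 := by rintro rfl; simp at hc; linarith
    set aq : ℚ_[p] := ((p : ℚ_[p]) * c)⁻¹ with haq
    have hp0 : (p : ℚ_[p]) ≠ 0 := by exact_mod_cast (Fact.out : p.Prime).ne_zero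
    have hnaq : ‖aq‖ ≤ 1 := by
      rw [haq, norm_inv, norm_mul, Padic.norm_p]
      rw [inv_le_one_iff₀]
      right
      have hpp : (0:ℝ) < (p:ℝ) := by exact_mod_cast (Fact.out : p.Prime).pos
      rw [inv_mul_eq_div, le_div_iff₀ hpp]
      have := norm_ge_p hc
      calc (1:ℝ) * (p:ℝ) = (p:ℝ) := one_mul _
        _ ≤ ‖c‖ := this
    set a : ℤ_[p] := ⟨aq, hnaq⟩ with ha
    have hca : c * (a : ℚ_[p]) = (p : ℚ_[p])⁻¹ := by
      rw [ha]
      show c * aq = _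
      field_simp [haq]
      rw [haq]; field_simp
    have hne : e (c * (a:ℚ_[p])) ≠ 1 := by
      rw [hca]
      intro h
      rw [he_ker] at h
      rw [norm_inv, Padic.norm_p] at h
      have hp1 : (1:ℝ) < (p:ℝ) := by exact_mod_cast (Fact.out : p.Prime).one_lt
      rw [inv_inv] at h
      linarith
    have key : ∫ u : ℤ_[p], e (c * (u:ℚ_[p])) ∂μ
        = e (c * (a:ℚ_[p])) * ∫ u : ℤ_[p], e (c * (u:ℚ_[p])) ∂μ := by
      conv_lhs => rw [← int_shift μ hμ_inv a (fun u : ℤ_[p] => e (c * (u:ℚ_[p])))]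
      rw [← integral_const_mul]
      congr 1
      ext u
      rw [← he_add]
      congr 1
      push_cast
      ring
    by_contra hI
    rcases mul_eq_mul_right_iff.1 (key.symm.trans (one_mul _).symm) with h | h
    · exact hne h
    · exact hI h


lemma toZModPow_eq_iff_norm (k : ℕ) (x y : ℤ_[p]) :
    PadicInt.toZModPow k x = PadicInt.toZModPow k y ↔ ‖x - y‖ ≤ (p:ℝ) ^ (-(k:ℤ)) := by
  rw [PadicInt.norm_le_pow_iff_mem_span_pow, ← PadicInt.ker_toZModPow, RingHom.mem_ker,
    map_sub, sub_eq_zero]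

lemma ball_measure [MeasurableSpace ℤ_[p]] [BorelSpace ℤ_[p]]
    (μ : Measure ℤ_[p])
    (hμ_inv : ∀ (a : ℤ_[p]) (s : Set ℤ_[p]), μ ((a + ·) ⁻¹' s) = μ s)
    (hμ_norm : μ Set.univ = 1) (k : ℕ) (a : ℤ_[p]) :
    μ {u : ℤ_[p] | ‖u - a‖ ≤ (p:ℝ) ^ (-(k:ℤ))} = ((p : ℝ≥0∞) ^ k)⁻¹ := by
  haveI : NeZero (p ^ k) := ⟨pow_ne_zero k (Fact.out : p.Prime).ne_zero⟩
  set ψ := (PadicInt.toZModPow (p := p) k) with hψ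
  set T : ZMod (p ^ k) → Set ℤ_[p] := fun c => {u : ℤ_[p] | ψ u = c} with hT
  -- each T c is a ball, hence measurable
  have hTball : ∀ c : ZMod (p ^ k), T c = {u : ℤ_[p] | ‖u - ((c.val : ℤ_[p]))‖ ≤ (p:ℝ) ^ (-(k:ℤ))} := by
    intro c
    ext u
    have hc : ψ ((c.val : ℕ) : ℤ_[p]) = c := by
      rw [hψ, map_natCast, ZMod.natCast_zmod_val]
    rw [hT]
    simp only [Set.mem_setOf_eq]
    rw [← toZModPow_eq_iff_norm k u (c.val : ℤ_[p]), hc]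
  have hTmeas : ∀ c, MeasurableSet (T c) := by
    intro c
    rw [hTball c]
    exact measurableSet_le (by fun_prop) measurable_const
  -- all cosets have equal measure
  have hTeq : ∀ c c' : ZMod (p ^ k), μ (T c) = μ (T c') := by
    intro c c'
    have hsurj : ψ (((c - c').val : ℕ) : ℤ_[p]) = c - c' := by
      rw [hψ, map_natCast, ZMod.natCast_zmod_val]
    set b : ℤ_[p] := (((c - c').val : ℕ) : ℤ_[p])
    have : (b + ·) ⁻¹' (T c) = T c' := by
      ext u
      simp only [hT, Set.mem_preimage, Set.mem_setOf_eq, map_add, hsurj]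
      constructor
      · intro h; linear_combination h
      · intro h; linear_combination h
    calc μ (T c) = μ ((b + ·) ⁻¹' (T c)) := (hμ_inv b (T c)).symm
      _ = μ (T c') := by rw [this]
  -- cover
  have hcover : (Set.univ : Set ℤ_[p]) = ⋃ c : ZMod (p ^ k), T c := by
    ext u; simp [hT]
  have hdisj : Pairwise (Function.onFun Disjoint T) := by
    intro c c' hcc
    simp only [Function.onFun, Set.disjoint_left, hT, Set.mem_setOf_eq]
    rintro u rfl h; exact hcc h
  have hsum : ∑' c : ZMod (p ^ k), μ (T c) = 1 := by
    rw [← measure_iUnion hdisj hTmeas, ← hcover, hμ_norm]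
  rw [tsum_fintype] at hsum
  have hall : ∀ c, μ (T c) = μ (T 0) := fun c => hTeq c 0
  rw [Finset.sum_congr rfl (fun c _ => hall c), Finset.sum_const, Finset.card_univ] at hsum
  rw [ZMod.card] at hsum
  have hn0 : ((p:ℝ≥0∞) ^ k) ≠ 0 := pow_ne_zero _ (by exact_mod_cast (Fact.out : p.Prime).ne_zero)
  have hntop : ((p:ℝ≥0∞) ^ k) ≠ ⊤ := by
    exact ENNReal.pow_ne_top (ENNReal.natCast_ne_top p)
  have hm : μ (T 0) = ((p:ℝ≥0∞) ^ k)⁻¹ := by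
    have h1 : ((p:ℝ≥0∞) ^ k) * μ (T 0) = 1 := by
      rw [← hsum]; rw [nsmul_eq_mul]; norm_cast
    calc μ (T 0) = ((p:ℝ≥0∞)^k)⁻¹ * (((p:ℝ≥0∞)^k) * μ (T 0)) := by
          rw [← mul_assoc, ENNReal.inv_mul_cancel hn0 hntop, one_mul]
      _ = ((p:ℝ≥0∞)^k)⁻¹ := by rw [h1, mul_one]
  have : {u : ℤ_[p] | ‖u - a‖ ≤ (p:ℝ) ^ (-(k:ℤ))} = T (ψ a) := by
    ext u
    simp only [hT, Set.mem_setOf_eq]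
    rw [← toZModPow_eq_iff_norm k u a]
  rw [this, hTeq (ψ a) 0, hm]


lemma exists_pow (ξ₃ ξ₄ : ℚ_[p])
    (h₃ : ξ₃ = 0 ∨ 1 ≤ ‖ξ₃‖) (h₄ : ξ₄ = 0 ∨ 1 ≤ ‖ξ₄‖) :
    ∃ k : ℕ, max (max ‖ξ₃‖ ‖ξ₄‖) 1 = (p:ℝ) ^ k := by
  have hp1 : (1:ℝ) < (p:ℝ) := by exact_mod_cast (Fact.out : p.Prime).one_lt
  have helper : ∀ ξ : ℚ_[p], (ξ = 0 ∨ 1 ≤ ‖ξ‖) → ∃ k : ℕ, max ‖ξ‖ 1 = (p:ℝ) ^ k := by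
    rintro ξ (rfl | h)
    · exact ⟨0, by simp⟩
    · have hξ0 : ξ ≠ 0 := by rintro rfl; simp at h; linarith
      rw [Padic.norm_eq_zpow_neg_valuation hξ0] at h ⊢
      have hval : -ξ.valuation ≥ 0 := by
        by_contra hcon
        push_neg at hcon
        have := zpow_lt_one_of_neg₀ hp1 hcon
        linarith
      refine ⟨(-ξ.valuation).toNat, ?_⟩
      rw [max_eq_left h, ← zpow_natCast]
      congr 1
      omega
  obtain ⟨k₃, hk₃⟩ := helper ξ₃ h₃
  obtain ⟨k₄, hk₄⟩ := helper ξ₄ h₄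
  refine ⟨max k₃ k₄, ?_⟩
  have : max (max ‖ξ₃‖ ‖ξ₄‖) 1 = max (max ‖ξ₃‖ 1) (max ‖ξ₄‖ 1) := by
    rw [max_max_max_comm, max_self]
  rw [this, hk₃, hk₄]
  rcases le_total k₃ k₄ with h | h
  · rw [max_eq_right (pow_le_pow_right₀ (le_of_lt hp1) h), max_eq_right h]
  · rw [max_eq_left (pow_le_pow_right₀ (le_of_lt hp1) h), max_eq_left h]

lemma norm_two_eq_one (hp : Odd p) : ‖(2 : ℚ_[p])‖ = 1 := by
  have h2 : ((2:ℤ) : ℚ_[p]) = (2 : ℚ_[p]) := by push_cast; ring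
  have hle : ‖((2:ℤ) : ℚ_[p])‖ ≤ 1 := Padic.norm_int_le_one 2
  rcases lt_or_eq_of_le hle with hlt | heq
  · exfalso
    rw [Padic.norm_intCast_lt_one_iff] at hlt
    have hdvd : p ∣ 2 := by exact_mod_cast hlt
    have : p = 2 := (Nat.prime_dvd_prime_iff_eq (Fact.out : p.Prime) Nat.prime_two).1 hdvd
    rw [this] at hp
    exact (Nat.not_odd_iff_even.2 (by norm_num)) hp
  · rw [← h2, heq]

lemma cond_iff (hp : Odd p) (ξ₃ ξ₄ : ℚ_[p])
    (h₃ : ξ₃ = 0 ∨ 1 ≤ ‖ξ₃‖) (h₄ : ξ₄ = 0 ∨ 1 ≤ ‖ξ₄‖) (u v : ℤ_[p]) :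
    (‖ξ₃ * ((u:ℚ_[p]) - v) + ξ₄ * ((u:ℚ_[p])^2 - (v:ℚ_[p])^2) / 2‖ ≤ 1 ∧
      ‖ξ₄ * ((u:ℚ_[p]) - v)‖ ≤ 1)
    ↔ ‖(u:ℚ_[p]) - v‖ ≤ (max (max ‖ξ₃‖ ‖ξ₄‖) 1)⁻¹ := by
  set M : ℝ := max (max ‖ξ₃‖ ‖ξ₄‖) 1 with hM
  have hM1 : 1 ≤ M := le_max_right _ _
  have hM0 : 0 < M := lt_of_lt_of_le one_pos hM1
  have h3M : ‖ξ₃‖ ≤ M := le_trans (le_max_left _ _) (le_max_left _ _)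
  have h4M : ‖ξ₄‖ ≤ M := le_trans (le_max_right _ _) (le_max_left _ _)
  set w : ℚ_[p] := (u:ℚ_[p]) - v with hw
  set s : ℚ_[p] := (u:ℚ_[p]) + v with hs
  have hw1 : ‖w‖ ≤ 1 := by
    have : w = ((u - v : ℤ_[p]) : ℚ_[p]) := by push_cast; ring
    rw [this]; exact (u - v).2
  have hs1 : ‖s‖ ≤ 1 := by
    have : s = ((u + v : ℤ_[p]) : ℚ_[p]) := by push_cast; ring
    rw [this]; exact (u + v).2
  have hsq : (u:ℚ_[p])^2 - (v:ℚ_[p])^2 = w * s := by rw [hw, hs]; ring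
  have h2 : ‖(2:ℚ_[p])‖ = 1 := norm_two_eq_one hp
  have hinv : (‖w‖ ≤ M⁻¹ ↔ M * ‖w‖ ≤ 1) := by
    constructor
    · intro h
      calc M * ‖w‖ ≤ M * M⁻¹ := mul_le_mul_of_nonneg_left h (le_of_lt hM0)
        _ = 1 := mul_inv_cancel₀ hM0.ne'
    · intro h
      calc ‖w‖ = M⁻¹ * (M * ‖w‖) := by field_simp
        _ ≤ M⁻¹ * 1 := mul_le_mul_of_nonneg_left h (by positivity)
        _ = M⁻¹ := mul_one _
  constructor
  · rintro ⟨hc₁, hc₂⟩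
    rw [hsq] at hc₁
    by_cases hw0 : w = 0
    · rw [hw0]; simp; positivity
    rcases le_or_gt ‖ξ₃‖ ‖ξ₄‖ with h34 | h34
    · rcases le_or_gt ‖ξ₄‖ 1 with h41 | h41
      · -- M = 1
        have : M = 1 := by
          rw [hM, max_eq_right]
          exact max_le (le_trans h34 h41) h41
        rw [this, inv_one]; exact hw1
      · -- M = ‖ξ₄‖
        have hMe : M = ‖ξ₄‖ := by
          rw [hM, max_eq_left (le_trans (le_of_lt h41) (le_max_right _ _)),
            max_eq_right h34]
        rw [norm_mul] at hc₂
        rw [hinv, hMe]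
        exact hc₂
    · -- ‖ξ₄‖ < ‖ξ₃‖
      rcases le_or_gt ‖ξ₃‖ 1 with h31 | h31
      · have : M = 1 := by
          rw [hM, max_eq_right]
          exact max_le h31 (le_trans (le_of_lt h34) h31)
        rw [this, inv_one]; exact hw1
      · have hMe : M = ‖ξ₃‖ := by
          rw [hM, max_eq_left (le_trans (le_of_lt h31) (le_max_left _ _)),
            max_eq_left (le_of_lt h34)]
        have hne : ‖ξ₄ * (w * s) / 2‖ < ‖ξ₃ * w‖ := by
          rw [norm_div, norm_mul, norm_mul, h2, div_one, norm_mul]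
          have hwpos : 0 < ‖w‖ := norm_pos_iff.2 hw0
          calc ‖ξ₄‖ * (‖w‖ * ‖s‖) ≤ ‖ξ₄‖ * (‖w‖ * 1) := by
                apply mul_le_mul_of_nonneg_left
                  (mul_le_mul_of_nonneg_left hs1 (norm_nonneg _)) (norm_nonneg _)
            _ = ‖ξ₄‖ * ‖w‖ := by ring
            _ < ‖ξ₃‖ * ‖w‖ := by
                apply mul_lt_mul_of_pos_right h34 hwpos
        have hkey : ‖ξ₃ * w + ξ₄ * (w * s) / 2‖ = ‖ξ₃ * w‖ := by
          rw [Padic.add_eq_max_of_ne (ne_of_gt hne)]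
          exact max_eq_left (le_of_lt hne)
        rw [hkey, norm_mul] at hc₁
        rw [hinv, hMe]
        exact hc₁
  · intro hwM
    have hMw : M * ‖w‖ ≤ 1 := hinv.1 hwM
    constructor
    · rw [hsq]
      apply le_trans (Padic.nonarchimedean _ _)
      apply max_le
      · rw [norm_mul]
        calc ‖ξ₃‖ * ‖w‖ ≤ M * ‖w‖ := mul_le_mul_of_nonneg_right h3M (norm_nonneg _)
          _ ≤ 1 := hMw
      · rw [norm_div, norm_mul, norm_mul, h2, div_one]
        calc ‖ξ₄‖ * (‖w‖ * ‖s‖) ≤ ‖ξ₄‖ * (‖w‖ * 1) :=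
              mul_le_mul_of_nonneg_left
                (mul_le_mul_of_nonneg_left hs1 (norm_nonneg _)) (norm_nonneg _)
          _ = ‖ξ₄‖ * ‖w‖ := by ring
          _ ≤ M * ‖w‖ := mul_le_mul_of_nonneg_right h4M (norm_nonneg _)
          _ ≤ 1 := hMw
    · rw [norm_mul]
      calc ‖ξ₄‖ * ‖w‖ ≤ M * ‖w‖ := mul_le_mul_of_nonneg_right h4M (norm_nonneg _)
        _ ≤ 1 := hMw


lemma cont_coe : Continuous (fun u : ℤ_[p] => (u : ℚ_[p])) := by continuity

/-- for an odd prime `p` and canonical representatives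
`ξ₃, ξ₄ ∈ ℚₚ` of classes in `ℚₚ/ℤₚ` (each is `0` or has norm `≥ 1`, with the
convention `|0|ₚ := 1`), the function
`f(x₂,x₃) := ∫_{ℤₚ} e^{2πi{(ξ₃x₂+ξ₄x₃)u + ξ₄x₂u²/2}ₚ} du` satisfies
`∫_{ℤₚ²} |f|² = max{|ξ₃|ₚ, |ξ₄|ₚ}⁻¹`. -/
theorem padic_oscillatory_L2_norm (p : ℕ) [Fact p.Prime] (hp : Odd p)
    [MeasurableSpace ℤ_[p]] [BorelSpace ℤ_[p]]
    (μ : Measure ℤ_[p])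
    (hμ_inv : ∀ (a : ℤ_[p]) (s : Set ℤ_[p]), μ ((a + ·) ⁻¹' s) = μ s)
    (hμ_norm : μ Set.univ = 1)
    (e : ℚ_[p] → ℂ)
    (he_add : ∀ x y, e (x + y) = e x * e y)
    (he_abs : ∀ x, ‖e x‖ = 1)
    (he_ker : ∀ x, e x = 1 ↔ ‖x‖ ≤ 1)
    (ξ₃ ξ₄ : ℚ_[p])
    (h₃ : ξ₃ = 0 ∨ 1 ≤ ‖ξ₃‖) (h₄ : ξ₄ = 0 ∨ 1 ≤ ‖ξ₄‖) :
    ∫ x : ℤ_[p] × ℤ_[p],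
        ‖∫ u : ℤ_[p],
          e ((ξ₃ * (x.1 : ℚ_[p]) + ξ₄ * (x.2 : ℚ_[p])) * (u : ℚ_[p]) +
            ξ₄ * (x.1 : ℚ_[p]) * (u : ℚ_[p]) ^ 2 / 2) ∂μ‖ ^ 2
        ∂(μ.prod μ) = (max (max ‖ξ₃‖ ‖ξ₄‖) 1)⁻¹ := by
  haveI : IsProbabilityMeasure μ := ⟨hμ_norm⟩
  have he : Continuous e := e_cont e he_add he_ker
  have hcoe : Continuous (fun u : ℤ_[p] => (u : ℚ_[p])) := cont_coe
  obtain ⟨k, hk⟩ := exists_pow ξ₃ ξ₄ h₃ h₄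
  set M : ℝ := max (max ‖ξ₃‖ ‖ξ₄‖) 1 with hM
  have hp1 : (1:ℝ) < (p:ℝ) := by exact_mod_cast (Fact.out : p.Prime).one_lt
  have hMinv : M⁻¹ = (p:ℝ) ^ (-(k:ℤ)) := by
    rw [hk, zpow_neg, zpow_natCast]
  -- abbreviations
  set g : (ℤ_[p] × ℤ_[p]) → ℤ_[p] → ℂ := fun x u =>
    e ((ξ₃ * (x.1:ℚ_[p]) + ξ₄ * (x.2:ℚ_[p])) * (u:ℚ_[p]) +
      ξ₄ * (x.1:ℚ_[p]) * (u:ℚ_[p])^2/2) with hgdef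
  set E : (ℤ_[p] × ℤ_[p]) → (ℤ_[p] × ℤ_[p]) → ℂ := fun x w =>
    g x w.1 * (starRingEnd ℂ) (g x w.2) with hEdef
  have hEcont : Continuous (Function.uncurry E) := by
    apply Continuous.mul
    · apply he.comp
      fun_prop
    · apply Complex.continuous_conj.comp
      apply he.comp
      fun_prop
  have hEint : Integrable (Function.uncurry E) ((μ.prod μ).prod (μ.prod μ)) :=
    hEcont.integrable_of_hasCompactSupport (HasCompactSupport.of_compactSpace _)
  have hF : Integrable (fun x => ∫ w, E x w ∂(μ.prod μ)) (μ.prod μ) :=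
    hEint.integral_prod_left
  -- step 1 : pointwise
  have step1 : ∀ x, ‖∫ u, g x u ∂μ‖^2 = (∫ w, E x w ∂(μ.prod μ)).re := by
    intro x
    have h1 : ∫ w : ℤ_[p] × ℤ_[p], E x w ∂(μ.prod μ)
        = (∫ u, g x u ∂μ) * (starRingEnd ℂ) (∫ u, g x u ∂μ) := by
      rw [← integral_conj]
      exact integral_prod_mul (g x) (fun u => (starRingEnd ℂ) (g x u))
    rw [h1, Complex.mul_conj]
    simp [Complex.sq_norm]
  -- main rewrite
  have hmain : ∫ x : ℤ_[p] × ℤ_[p], ‖∫ u, g x u ∂μ‖^2 ∂(μ.prod μ)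
      = (∫ w, ∫ x, E x w ∂(μ.prod μ) ∂(μ.prod μ)).re := by
    calc ∫ x : ℤ_[p] × ℤ_[p], ‖∫ u, g x u ∂μ‖^2 ∂(μ.prod μ)
        = ∫ x, (∫ w, E x w ∂(μ.prod μ)).re ∂(μ.prod μ) := by
          apply integral_congr_ae
          filter_upwards with x using step1 x
      _ = (∫ x, ∫ w, E x w ∂(μ.prod μ) ∂(μ.prod μ)).re := by
          rw [← RCLike.re_to_complex]
          rw [← integral_re hF]
          simp [RCLike.re_to_complex]
      _ = (∫ w, ∫ x, E x w ∂(μ.prod μ) ∂(μ.prod μ)).re := by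
          rw [integral_integral_swap hEint]
  -- inner integral
  have inner : ∀ w : ℤ_[p] × ℤ_[p], (∫ x, E x w ∂(μ.prod μ))
      = if ‖(w.1:ℚ_[p]) - (w.2:ℚ_[p])‖ ≤ M⁻¹ then 1 else 0 := by
    rintro ⟨u, v⟩
    set c₁ : ℚ_[p] := ξ₃ * ((u:ℚ_[p]) - v) + ξ₄ * ((u:ℚ_[p])^2 - (v:ℚ_[p])^2) / 2 with hc₁
    set c₂ : ℚ_[p] := ξ₄ * ((u:ℚ_[p]) - v) with hc₂
    have hpt : ∀ x : ℤ_[p] × ℤ_[p], E x (u, v) = e (c₁ * (x.1:ℚ_[p])) * e (c₂ * (x.2:ℚ_[p])) := by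
      intro x
      rw [hEdef]
      dsimp only
      rw [e_conj e he_add he_abs he_ker, ← he_add, ← he_add]
      congr 1
      rw [hc₁, hc₂]
      field_simp
      ring
    calc (∫ x, E x (u, v) ∂(μ.prod μ))
        = ∫ x : ℤ_[p] × ℤ_[p], e (c₁ * (x.1:ℚ_[p])) * e (c₂ * (x.2:ℚ_[p])) ∂(μ.prod μ) := by
          apply integral_congr_ae
          filter_upwards with x using hpt x
      _ = (∫ x : ℤ_[p], e (c₁ * (x:ℚ_[p])) ∂μ) * (∫ x : ℤ_[p], e (c₂ * (x:ℚ_[p])) ∂μ) :=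
          integral_prod_mul (fun x : ℤ_[p] => e (c₁ * (x:ℚ_[p]))) (fun x : ℤ_[p] => e (c₂ * (x:ℚ_[p])))
      _ = (if ‖c₁‖ ≤ 1 then 1 else 0) * (if ‖c₂‖ ≤ 1 then 1 else 0) := by
          rw [char_integral μ hμ_inv hμ_norm e he_add he_ker c₁,
            char_integral μ hμ_inv hμ_norm e he_add he_ker c₂]
      _ = if ‖(u:ℚ_[p]) - (v:ℚ_[p])‖ ≤ M⁻¹ then 1 else 0 := by
          have hiff := cond_iff hp ξ₃ ξ₄ h₃ h₄ u v
          rw [← hc₁, ← hc₂] at hiff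
          by_cases h1 : ‖c₁‖ ≤ 1 <;> by_cases h2 : ‖c₂‖ ≤ 1
          · rw [if_pos h1, if_pos h2, if_pos (hiff.1 ⟨h1, h2⟩), one_mul]
          · rw [if_neg h2, mul_zero, if_neg (fun hc => h2 ((hiff.2 hc).2))]
          · rw [if_neg h1, zero_mul, if_neg (fun hc => h1 ((hiff.2 hc).1))]
          · rw [if_neg h1, zero_mul, if_neg (fun hc => h1 ((hiff.2 hc).1))]
  -- measure of the set
  set S : Set (ℤ_[p] × ℤ_[p]) := {w | ‖(w.1:ℚ_[p]) - (w.2:ℚ_[p])‖ ≤ M⁻¹} with hSdef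
  have hSmeas : MeasurableSet S := by
    have hc : Continuous (fun w : ℤ_[p] × ℤ_[p] => ‖(w.1:ℚ_[p]) - (w.2:ℚ_[p])‖) := by
      fun_prop
    exact measurableSet_le hc.measurable measurable_const
  have hSm : (μ.prod μ) S = ((p:ℝ≥0∞) ^ k)⁻¹ := by
    rw [Measure.prod_apply hSmeas]
    have hslice : ∀ u : ℤ_[p], (Prod.mk u ⁻¹' S) = {v : ℤ_[p] | ‖v - u‖ ≤ (p:ℝ) ^ (-(k:ℤ))} := by
      intro u
      ext v
      simp only [hSdef, Set.mem_preimage, Set.mem_setOf_eq]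
      rw [hMinv]
      have : ((u:ℚ_[p]) - (v:ℚ_[p])) = ((u - v : ℤ_[p]) : ℚ_[p]) := by push_cast; ring
      rw [this, ← PadicInt.norm_def, norm_sub_rev]
    calc ∫⁻ u, μ (Prod.mk u ⁻¹' S) ∂μ
        = ∫⁻ _, ((p:ℝ≥0∞) ^ k)⁻¹ ∂μ := by
          apply lintegral_congr
          intro u
          rw [hslice u, ball_measure μ hμ_inv hμ_norm k u]
      _ = ((p:ℝ≥0∞) ^ k)⁻¹ := by rw [lintegral_const, measure_univ, mul_one]
  -- final computation
  rw [hmain]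
  have : ∫ w, (∫ x, E x w ∂(μ.prod μ)) ∂(μ.prod μ)
      = ∫ w, S.indicator (fun _ => (1:ℂ)) w ∂(μ.prod μ) := by
    apply integral_congr_ae
    filter_upwards with w
    rw [inner w, Set.indicator_apply]
    rfl
  rw [this, integral_indicator_const (1:ℂ) hSmeas, measureReal_def, hSm]
  rw [ENNReal.toReal_inv]
  have h2 : ((p:ℝ≥0∞) ^ k).toReal = (p:ℝ) ^ k := by simp
  rw [h2, hk, Complex.real_smul, mul_one, Complex.ofReal_re]
end

section
/- For an odd prime p and ξ = (ξ₁,ξ₂,ξ₃,ξ₄) ∈ (ℚₚ/ℤₚ)⁴, the map πξ defined on ℂ-valued square-integrable functions on ℤₚ by (πξ(x)φ)(u) := e^{2πi{ξ₁x₁+ξ₂x₂+ξ₃(x₃+ux₂)+ξ₄(x₄+ux₃+(u²/2)x₂)}ₚ} φ(u+x₁) satisfies πξ(x ⋆ y) = πξ(x)πξ(y) for all x, y ∈ ℬ₄(ℤₚ), i.e. it is a group homomorphism into the unitary operators on L²(ℤₚ). -/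
/-- The Engel group multiplication on `ℤₚ⁴`, where `h` plays the role of `½`. -/
noncomputable def engelMul {p : ℕ} [Fact p.Prime] (h : ℤ_[p])
    (x y : ℤ_[p] × ℤ_[p] × ℤ_[p] × ℤ_[p]) :
    ℤ_[p] × ℤ_[p] × ℤ_[p] × ℤ_[p] :=
  (x.1 + y.1, x.2.1 + y.2.1, x.2.2.1 + y.2.2.1 + x.1 * y.2.1,
    x.2.2.2 + y.2.2.2 + x.1 * y.2.2.1 + h * x.1 ^ 2 * y.2.1)

/-- The action `(πξ(x)φ)(u) :=
`e^{2πi{ξ₁x₁+ξ₂x₂+ξ₃(x₃+ux₂)+ξ₄(x₄+ux₃+(u²/2)x₂)}ₚ} φ(u+x₁)`,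
with the standard character abstracted as `e : ℚₚ → ℂ`. -/
noncomputable def engelAct {p : ℕ} [Fact p.Prime] (e : ℚ_[p] → ℂ)
    (ξ₁ ξ₂ ξ₃ ξ₄ : ℚ_[p]) (x : ℤ_[p] × ℤ_[p] × ℤ_[p] × ℤ_[p])
    (φ : ℤ_[p] → ℂ) (u : ℤ_[p]) : ℂ :=
  e (ξ₁ * (x.1 : ℚ_[p]) + ξ₂ * (x.2.1 : ℚ_[p]) +
      ξ₃ * ((x.2.2.1 : ℚ_[p]) + (u : ℚ_[p]) * (x.2.1 : ℚ_[p])) +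
      ξ₄ * ((x.2.2.2 : ℚ_[p]) + (u : ℚ_[p]) * (x.2.2.1 : ℚ_[p]) +
        (u : ℚ_[p]) ^ 2 / 2 * (x.2.1 : ℚ_[p]))) *
    φ (u + x.1)

/-- for every `ξ ∈ (ℚₚ/ℤₚ)⁴` (given by representatives
`ξ₁, ξ₂, ξ₃, ξ₄ ∈ ℚₚ`), the map `πξ` satisfies `πξ(x ⋆ y) = πξ(x) πξ(y)`, i.e.
it is a group homomorphism of `ℬ₄(ℤₚ)` into the (unitary) operators on
functions on `ℤₚ`. -/
theorem engelAct_mul (p : ℕ) [Fact p.Prime] (hp : Odd p)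
    (h : ℤ_[p]) (h2 : 2 * h = 1)
    (e : ℚ_[p] → ℂ)
    (he_add : ∀ x y, e (x + y) = e x * e y)
    (he_abs : ∀ x, ‖e x‖ = 1)
    (he_ker : ∀ x, e x = 1 ↔ ‖x‖ ≤ 1)
    (ξ₁ ξ₂ ξ₃ ξ₄ : ℚ_[p])
    (x y : ℤ_[p] × ℤ_[p] × ℤ_[p] × ℤ_[p]) (φ : ℤ_[p] → ℂ) :
    engelAct e ξ₁ ξ₂ ξ₃ ξ₄ (engelMul h x y) φ =
      engelAct e ξ₁ ξ₂ ξ₃ ξ₄ x (engelAct e ξ₁ ξ₂ ξ₃ ξ₄ y φ) := by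
  have h2' : (h : ℚ_[p]) = 1 / 2 := by
    have t : (2 : ℚ_[p]) * (h : ℚ_[p]) = 1 := by exact_mod_cast congrArg (fun z : ℤ_[p] => (z : ℚ_[p])) h2
    field_simp
    linear_combination t
  funext u
  simp only [engelAct, engelMul]
  rw [← mul_assoc, ← he_add]
  congr 1
  · congr 1
    push_cast
    rw [h2']
    ring
  · congr 1
    push_cast
    ring
end

section
/- Let p be an odd prime, α > 0, and V ∈ ℤₚᵈ \ {0}. The directional Vladimirov–Taibleson operator ∂_V^α f(x) := c(α)·∫_{ℤₚ} (f(x−tV) − f(x))·|t|ₚ^{−(α+1)} dt with c(α) = (1−p^α)/(1−p^{−(α+1)}) applied to the character e_ξ(x) := e^{2πi{ξ·x}ₚ}, ξ ∈ (ℚₚ/ℤₚ)ᵈ, yields ∂_V^α e_ξ = λ·e_ξ where λ = 0 if V·ξ ∈ ℤₚ, and λ = |V·ξ|ₚ^α − (1−p^{−1})/(1−p^{−(α+1)}) otherwise. -/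
open MeasureTheory
open scoped Classical

section VTAux

variable {p : ℕ} [hp : Fact p.Prime]

/-- The ball of radius `p^{-k}` in `ℤ_[p]`. -/
private def Bse (p : ℕ) [Fact p.Prime] (k : ℕ) : Set ℤ_[p] :=
  {t : ℤ_[p] | ‖t‖ ≤ (p : ℝ) ^ (-(k : ℤ))}

private lemma mem_Bse {k : ℕ} {t : ℤ_[p]} : t ∈ Bse p k ↔ ‖t‖ ≤ (p : ℝ) ^ (-(k : ℤ)) := Iff.rfl

private lemma Bse_zero : Bse p 0 = Set.univ := by
  ext t; simp [Bse, PadicInt.norm_le_one]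

private lemma Bse_meas [MeasurableSpace ℤ_[p]] [BorelSpace ℤ_[p]] (k : ℕ) :
    MeasurableSet (Bse p k) := by
  have : Bse p k = Metric.closedBall 0 ((p : ℝ) ^ (-(k : ℤ))) := by
    ext t; simp [Bse, Metric.mem_closedBall, dist_eq_norm]
  rw [this]; exact measurableSet_closedBall

private lemma add_mem_Bse_iff {k : ℕ} {a : ℤ_[p]} (ha : a ∈ Bse p k) (t : ℤ_[p]) :
    a + t ∈ Bse p k ↔ t ∈ Bse p k := by
  constructor
  · intro h
    have : ‖t‖ ≤ max ‖(-a)‖ ‖a + t‖ := by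
      simpa [neg_add_cancel_left] using PadicInt.nonarchimedean (-a) (a + t)
    exact le_trans this (max_le (by rw [norm_neg]; exact ha) h)
  · intro h
    exact le_trans (PadicInt.nonarchimedean a t) (max_le ha h)

/-- Uniqueness of coset representatives. -/
private lemma coset_unique {k j j' : ℕ} (hj : j < p ^ k) (hj' : j' < p ^ k)
    (h : (j : ℤ_[p]) - (j' : ℤ_[p]) ∈ Bse p k) : j = j' := by
  have h2 : ‖(((j : ℤ) - (j' : ℤ) : ℤ) : ℤ_[p])‖ ≤ (p : ℝ) ^ (-(k : ℤ)) := by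
    push_cast
    exact h
  rw [PadicInt.norm_int_le_pow_iff_dvd] at h2
  have h3 : ((j : ℤ) - j') = 0 := by
    apply Int.eq_zero_of_abs_lt_dvd h2
    have : ((p : ℤ) ^ k) = ((p ^ k : ℕ) : ℤ) := by push_cast; ring
    rw [this]
    rw [abs_sub_lt_iff]
    omega
  omega

private lemma coset_unique' {k j j' : ℕ} (hj : j < p ^ k) (hj' : j' < p ^ k) {t : ℤ_[p]}
    (h1 : t - (j : ℤ_[p]) ∈ Bse p k) (h2 : t - (j' : ℤ_[p]) ∈ Bse p k) : j = j' := by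
  apply coset_unique hj hj'
  have hsub : (j : ℤ_[p]) - (j' : ℤ_[p]) = -(t - (j : ℤ_[p])) + (t - (j' : ℤ_[p])) := by ring
  rw [mem_Bse, hsub]
  refine le_trans (PadicInt.nonarchimedean _ _) (max_le ?_ h2)
  rw [norm_neg]; exact h1

/-- Existence of coset representative. -/
private lemma coset_exists (k : ℕ) (t : ℤ_[p]) :
    ∃ j : ℕ, j < p ^ k ∧ t - (j : ℤ_[p]) ∈ Bse p k := by
  refine ⟨t.appr k, t.appr_lt k, ?_⟩
  rw [mem_Bse, PadicInt.norm_le_pow_iff_mem_span_pow]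
  exact t.appr_spec k

variable [MeasurableSpace ℤ_[p]] [BorelSpace ℤ_[p]] (μ : Measure ℤ_[p])

private lemma integral_shift (hμ_inv : ∀ (a : ℤ_[p]) (s : Set ℤ_[p]), μ ((a + ·) ⁻¹' s) = μ s)
    (a : ℤ_[p]) (f : ℤ_[p] → ℂ) :
    ∫ t, f (a + t) ∂μ = ∫ t, f t ∂μ := by
  have hmap : Measure.map (a + ·) μ = μ := by
    refine Measure.ext fun s hs => ?_
    rw [Measure.map_apply (measurable_const_add a) hs]
    exact hμ_inv a s
  conv_rhs => rw [← hmap]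
  exact ((Homeomorph.addLeft a).measurableEmbedding.integral_map f).symm

private lemma measure_Bse (hμ_inv : ∀ (a : ℤ_[p]) (s : Set ℤ_[p]), μ ((a + ·) ⁻¹' s) = μ s)
    (hμ_norm : μ Set.univ = 1) (k : ℕ) :
    μ (Bse p k) = ((p : ENNReal) ^ k)⁻¹ := by
  classical
  set C : ℕ → Set ℤ_[p] := fun j => ((fun t => (-(j : ℤ_[p])) + t) ⁻¹' Bse p k) with hC
  have hCmem : ∀ j t, t ∈ C j ↔ t - (j : ℤ_[p]) ∈ Bse p k := by
    intro j t
    simp [hC, Set.mem_preimage, neg_add_eq_sub]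
  have hCmeas : ∀ j, MeasurableSet (C j) :=
    fun j => (measurable_const_add _) (Bse_meas k)
  have hCμ : ∀ j, μ (C j) = μ (Bse p k) := fun j => hμ_inv _ _
  have hcover : Set.univ = ⋃ j ∈ Finset.range (p ^ k), C j := by
    ext t
    simp only [Set.mem_univ, true_iff, Set.mem_iUnion, Finset.mem_range]
    obtain ⟨j, hj, hmem⟩ := coset_exists k t
    exact ⟨j, hj, (hCmem j t).2 hmem⟩
  have hdisj : (↑(Finset.range (p ^ k)) : Set ℕ).PairwiseDisjoint C := by
    intro i hi j hj hij
    simp only [Finset.coe_range, Set.mem_Iio] at hi hj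
    refine Set.disjoint_left.2 fun t hti htj => hij ?_
    exact coset_unique' hi hj ((hCmem i t).1 hti) ((hCmem j t).1 htj)
  have hsum : μ Set.univ = ∑ j ∈ Finset.range (p ^ k), μ (C j) := by
    rw [hcover]
    exact measure_biUnion_finset hdisj fun j _ => hCmeas j
  rw [hμ_norm] at hsum
  simp only [hCμ, Finset.sum_const, Finset.card_range, nsmul_eq_mul] at hsum
  have hne0 : ((p ^ k : ℕ) : ENNReal) ≠ 0 := by
    simp [pow_ne_zero, hp.out.ne_zero]
  have hnetop : ((p ^ k : ℕ) : ENNReal) ≠ ⊤ := by simp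
  have : μ (Bse p k) = ((p ^ k : ℕ) : ENNReal)⁻¹ := by
    rw [← one_mul (μ (Bse p k)), ← ENNReal.inv_mul_cancel hne0 hnetop, mul_assoc, ← hsum, mul_one]
  rw [this]; push_cast; ring

private lemma vanish (hμ_inv : ∀ (a : ℤ_[p]) (s : Set ℤ_[p]), μ ((a + ·) ⁻¹' s) = μ s)
    (f : ℤ_[p] → ℂ) (k : ℕ) (a : ℤ_[p]) (ha : a ∈ Bse p k)
    (c : ℂ) (hc : c ≠ 1) (hshift : ∀ t, f (a + t) = c * f t) :
    ∫ t, (Bse p k).indicator f t ∂μ = 0 := by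
  have key : ∀ t, (Bse p k).indicator f (a + t) = c * (Bse p k).indicator f t := by
    intro t
    by_cases ht : t ∈ Bse p k
    · rw [Set.indicator_of_mem ((add_mem_Bse_iff ha t).2 ht), Set.indicator_of_mem ht, hshift]
    · rw [Set.indicator_of_notMem (fun h => ht ((add_mem_Bse_iff ha t).1 h)),
        Set.indicator_of_notMem ht, mul_zero]
  have h1 : ∫ t, (Bse p k).indicator f (a + t) ∂μ = ∫ t, (Bse p k).indicator f t ∂μ :=
    integral_shift μ hμ_inv a _
  simp only [key] at h1
  rw [MeasureTheory.integral_const_mul] at h1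
  have h2 : (c - 1) * ∫ t, (Bse p k).indicator f t ∂μ = 0 := by
    rw [sub_mul, one_mul, h1, sub_self]
  rcases mul_eq_zero.1 h2 with h | h
  · exact absurd (sub_eq_zero.1 h) hc
  · exact h

end VTAux

private lemma vt_real_identity {E q : ℝ} (hE : 1 < E) (hq : 1 < q) (m : ℕ) :
    (1 - E) / (1 - (E * q)⁻¹) *
      (-1 - ∑ k ∈ Finset.range m, ((E * q) ^ (k + 1) - (E * q) ^ k) * (q⁻¹) ^ (k + 1)) =
    E ^ (m + 1) - (1 - q⁻¹) / (1 - (E * q)⁻¹) := by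
  have hq0 : q ≠ 0 := by positivity
  have hE0 : E ≠ 0 := by positivity
  have hEq1 : 1 < E * q := by nlinarith
  have hEq0 : E * q ≠ 0 := by positivity
  have hd : 1 - (E * q)⁻¹ ≠ 0 := by
    have h1 : (E * q)⁻¹ < 1 := by
      rw [inv_lt_one_iff₀]; right; exact hEq1
    linarith
  have hne : E * q - 1 ≠ 0 := by nlinarith
  have hDeq : 1 - (E * q)⁻¹ = (E * q - 1) / (E * q) := by field_simp
  induction m with
  | zero =>
    simp only [Finset.range_zero, Finset.sum_empty, sub_zero, pow_one]
    rw [hDeq]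
    field_simp
    ring
  | succ n ih =>
    rw [Finset.sum_range_succ]
    have expand : (1 - E) / (1 - (E * q)⁻¹) *
        (-1 - (∑ k ∈ Finset.range n, ((E * q) ^ (k + 1) - (E * q) ^ k) * (q⁻¹) ^ (k + 1)
          + ((E * q) ^ (n + 1) - (E * q) ^ n) * (q⁻¹) ^ (n + 1))) =
        (1 - E) / (1 - (E * q)⁻¹) *
        (-1 - ∑ k ∈ Finset.range n, ((E * q) ^ (k + 1) - (E * q) ^ k) * (q⁻¹) ^ (k + 1))
        - (1 - E) / (1 - (E * q)⁻¹) * (((E * q) ^ (n + 1) - (E * q) ^ n) * (q⁻¹) ^ (n + 1)) := by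
      ring
    rw [expand, ih]
    have hkey : (1 - E) / (1 - (E * q)⁻¹) * (((E * q) ^ (n + 1) - (E * q) ^ n) * (q⁻¹) ^ (n + 1))
        = E ^ (n + 1) - E ^ (n + 2) := by
      rw [hDeq, inv_pow]
      field_simp
      ring
    rw [hkey]
    ring

/-- the directional Vladimirov–Taibleson operator
`∂_V^α f(x) := c(α)·∫_{ℤₚ} (f(x−tV) − f(x))·|t|ₚ^{−(α+1)} dt`, with
`c(α) = (1−p^α)/(1−p^{−(α+1)})`, applied to the character
`e_ξ(x) = e^{2πi{ξ·x}ₚ}` yields `∂_V^α e_ξ = λ·e_ξ`, where `λ = 0` if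
`V·ξ ∈ ℤₚ` and `λ = |V·ξ|ₚ^α − (1−p^{−1})/(1−p^{−(α+1)})` otherwise. -/
theorem directionalVT_on_character (p : ℕ) [Fact p.Prime] (hp : Odd p)
    [MeasurableSpace ℤ_[p]] [BorelSpace ℤ_[p]]
    (μ : Measure ℤ_[p])
    (hμ_inv : ∀ (a : ℤ_[p]) (s : Set ℤ_[p]), μ ((a + ·) ⁻¹' s) = μ s)
    (hμ_norm : μ Set.univ = 1)
    (e : ℚ_[p] → ℂ)
    (he_add : ∀ x y, e (x + y) = e x * e y)
    (he_abs : ∀ x, ‖e x‖ = 1)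
    (he_ker : ∀ x, e x = 1 ↔ ‖x‖ ≤ 1)
    (α : ℝ) (hα : 0 < α)
    (d : ℕ) (V : Fin d → ℤ_[p]) (hV : V ≠ 0)
    (ξ : Fin d → ℚ_[p]) (x : Fin d → ℤ_[p]) :
    (((1 - (p : ℝ) ^ α) / (1 - (p : ℝ) ^ (-(α + 1))) : ℝ) : ℂ) *
        ∫ t : ℤ_[p],
          (e (∑ i, ξ i * ((x i - t * V i : ℤ_[p]) : ℚ_[p])) -
              e (∑ i, ξ i * ((x i : ℤ_[p]) : ℚ_[p]))) *
            ((‖t‖ ^ (-(α + 1)) : ℝ) : ℂ) ∂μ =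
      Complex.ofReal
          (if ‖∑ i, (V i : ℚ_[p]) * ξ i‖ ≤ 1 then (0 : ℝ)
            else ‖∑ i, (V i : ℚ_[p]) * ξ i‖ ^ α -
              (1 - (p : ℝ)⁻¹) / (1 - (p : ℝ) ^ (-(α + 1)))) *
        e (∑ i, ξ i * ((x i : ℤ_[p]) : ℚ_[p])) := by
  haveI : IsProbabilityMeasure μ := ⟨hμ_norm⟩
  have hprime : p.Prime := Fact.out
  have hp1 : (1 : ℝ) < p := by exact_mod_cast hprime.one_lt
  have hp0 : (0 : ℝ) < p := lt_trans one_pos hp1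
  set S : ℚ_[p] := ∑ i, (V i : ℚ_[p]) * ξ i with hS_def
  set w : ℚ_[p] := ∑ i, ξ i * ((x i : ℤ_[p]) : ℚ_[p]) with hw_def
  set f : ℤ_[p] → ℂ := fun t => e (-((t : ℚ_[p]) * S)) with hf_def
  have hf_mul : ∀ a t : ℤ_[p], f (a + t) = f a * f t := by
    intro a t
    rw [hf_def]
    simp only
    rw [← he_add]
    congr 1
    push_cast
    ring
  have hf_norm : ∀ t, ‖f t‖ ≤ 1 := by
    intro t
    rw [hf_def]
    simp only
    rw [he_abs]
  -- rewrite the integrand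
  have hpt : ∀ t : ℤ_[p],
      (e (∑ i, ξ i * ((x i - t * V i : ℤ_[p]) : ℚ_[p])) - e w) * ((‖t‖ ^ (-(α + 1)) : ℝ) : ℂ)
        = e w * ((f t - 1) * ((‖t‖ ^ (-(α + 1)) : ℝ) : ℂ)) := by
    intro t
    have hlin : (∑ i, ξ i * ((x i - t * V i : ℤ_[p]) : ℚ_[p])) = w + (-((t : ℚ_[p]) * S)) := by
      have hterm : ∀ i, ξ i * ((x i - t * V i : ℤ_[p]) : ℚ_[p])
          = ξ i * ((x i : ℤ_[p]) : ℚ_[p]) + (-((t : ℚ_[p]) * ((V i : ℚ_[p]) * ξ i))) := by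
        intro i; push_cast; ring
      rw [Finset.sum_congr rfl fun i _ => hterm i, Finset.sum_add_distrib]
      rw [hw_def, hS_def, Finset.mul_sum, ← Finset.sum_neg_distrib]
    rw [hlin, he_add, hf_def]
    ring
  have hIeq : ∫ t : ℤ_[p],
      (e (∑ i, ξ i * ((x i - t * V i : ℤ_[p]) : ℚ_[p])) - e w) * ((‖t‖ ^ (-(α + 1)) : ℝ) : ℂ) ∂μ
        = e w * ∫ t : ℤ_[p], (f t - 1) * ((‖t‖ ^ (-(α + 1)) : ℝ) : ℂ) ∂μ := by
    rw [← MeasureTheory.integral_const_mul]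
    exact integral_congr_ae (Filter.Eventually.of_forall hpt)
  rw [hIeq]
  by_cases hScase : ‖S‖ ≤ 1
  · rw [if_pos hScase]
    have hzero : ∀ t : ℤ_[p], (f t - 1) * ((‖t‖ ^ (-(α + 1)) : ℝ) : ℂ) = 0 := by
      intro t
      have hft : f t = 1 := by
        rw [hf_def]
        apply (he_ker _).2
        rw [norm_neg, norm_mul, PadicInt.padic_norm_e_of_padicInt]
        have h1 := PadicInt.norm_le_one t
        have h2 := norm_nonneg (t : ℚ_[p])
        nlinarith [norm_nonneg S]
      rw [hft, sub_self, zero_mul]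
    have : ∫ t : ℤ_[p], (f t - 1) * ((‖t‖ ^ (-(α + 1)) : ℝ) : ℂ) ∂μ = 0 := by
      simp only [hzero]
      exact integral_zero _ _
    rw [this]
    simp
  · rw [if_neg hScase]
    push_neg at hScase
    have hS0 : S ≠ 0 := by
      intro h; rw [h, norm_zero] at hScase; linarith
    have hvalneg : 0 < -S.valuation := by
      by_contra h
      push_neg at h
      have h2 : ‖S‖ ≤ 1 := by
        rw [Padic.norm_eq_zpow_neg_valuation hS0]
        calc (p : ℝ) ^ (-S.valuation) ≤ (p : ℝ) ^ (0 : ℤ) := zpow_le_zpow_right₀ hp1.le h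
        _ = 1 := zpow_zero _
      linarith
    set m : ℕ := (-S.valuation).toNat with hm_def
    have hm_int : (m : ℤ) = -S.valuation := Int.toNat_of_nonneg hvalneg.le
    have hm1 : 1 ≤ m := by omega
    have hnormS : ‖S‖ = (p : ℝ) ^ (m : ℕ) := by
      rw [Padic.norm_eq_zpow_neg_valuation hS0, ← hm_int, zpow_natCast]
    set E : ℝ := (p : ℝ) ^ α with hE_def
    have hE1 : (1 : ℝ) < E :=
      (Real.one_lt_rpow_iff_of_pos hp0).2 (Or.inl ⟨hp1, hα⟩)
    have hA : (p : ℝ) ^ (α + 1) = E * p := by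
      rw [hE_def, Real.rpow_add hp0, Real.rpow_one]
    have hQ : (p : ℝ) ^ (-(α + 1)) = (E * p)⁻¹ := by
      rw [Real.rpow_neg hp0.le, hA]
    -- measurability of f
    have hDmeas : ∀ j : ℕ, MeasurableSet {s : ℤ_[p] | s - (j : ℤ_[p]) ∈ Bse p m} := by
      intro j
      have heq : {s : ℤ_[p] | s - (j : ℤ_[p]) ∈ Bse p m}
          = ((fun s => (-(j : ℤ_[p])) + s) ⁻¹' Bse p m) := by
        ext s; simp [Set.mem_preimage, neg_add_eq_sub]
      rw [heq]
      exact (measurable_const_add _) (Bse_meas m)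
    have hfBse : ∀ s : ℤ_[p], s ∈ Bse p m → f s = 1 := by
      intro s hs
      rw [hf_def]
      apply (he_ker _).2
      rw [norm_neg, norm_mul, PadicInt.padic_norm_e_of_padicInt, hnormS]
      calc ‖s‖ * (p : ℝ) ^ (m : ℕ) ≤ (p : ℝ) ^ (-(m : ℤ)) * (p : ℝ) ^ (m : ℕ) := by
            apply mul_le_mul_of_nonneg_right hs (by positivity)
      _ = 1 := by
            rw [← zpow_natCast (p : ℝ) m, ← zpow_add₀ (ne_of_gt hp0)]
            simp
    have hf_repr : ∀ t, f t = ∑ j ∈ Finset.range (p ^ m),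
        ({s : ℤ_[p] | s - (j : ℤ_[p]) ∈ Bse p m}).indicator (fun _ => f (j : ℤ_[p])) t := by
      intro t
      obtain ⟨j₀, hj₀lt, hj₀mem⟩ := coset_exists m t
      rw [Finset.sum_eq_single j₀]
      · rw [Set.indicator_of_mem (show t ∈ {s : ℤ_[p] | s - (j₀ : ℤ_[p]) ∈ Bse p m} from hj₀mem)]
        have hsplit : f t = f (j₀ : ℤ_[p]) * f (t - (j₀ : ℤ_[p])) := by
          rw [← hf_mul]
          congr 1
          ring
        rw [hsplit, hfBse _ hj₀mem, mul_one]
      · intro j hj hne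
        rw [Set.indicator_of_notMem]
        intro hmem
        exact hne (coset_unique' (Finset.mem_range.1 hj) hj₀lt hmem hj₀mem)
      · intro h
        exact absurd (Finset.mem_range.2 hj₀lt) h
    have hf_meas : Measurable f := by
      have : f = fun t => ∑ j ∈ Finset.range (p ^ m),
          ({s : ℤ_[p] | s - (j : ℤ_[p]) ∈ Bse p m}).indicator (fun _ => f (j : ℤ_[p])) t :=
        funext hf_repr
      rw [this]
      exact Finset.measurable_sum _ fun j _ => (measurable_const.indicator (hDmeas j))
    have hf_int : Integrable f μ := by
      apply Integrable.mono' (integrable_const (1 : ℝ)) hf_meas.aestronglyMeasurable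
      exact Filter.Eventually.of_forall hf_norm
    -- vanishing of character integrals
    have hvanish : ∀ k : ℕ, k < m → ∫ t, (Bse p k).indicator f t ∂μ = 0 := by
      intro k hk
      apply vanish μ hμ_inv f k ((p : ℤ_[p]) ^ k) _ (f ((p : ℤ_[p]) ^ k)) _ (hf_mul _)
      · rw [mem_Bse, PadicInt.norm_p_pow]
      · intro hone
        rw [hf_def] at hone
        have hle := (he_ker _).1 hone
        rw [norm_neg, norm_mul] at hle
        have hnp : ‖(((p : ℤ_[p]) ^ k : ℤ_[p]) : ℚ_[p])‖ = (p : ℝ) ^ (-(k : ℤ)) := by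
          push_cast
          exact Padic.norm_p_pow k
        rw [hnp, hnormS, ← zpow_natCast (p : ℝ) m, ← zpow_add₀ (ne_of_gt hp0)] at hle
        have hgt : (1 : ℝ) < (p : ℝ) ^ (-(k : ℤ) + (m : ℤ)) := by
          apply one_lt_zpow₀ hp1
          omega
        linarith
    -- measure of balls
    have hμB : ∀ j : ℕ, (μ (Bse p j)).toReal = ((p : ℝ)⁻¹) ^ j := by
      intro j
      rw [measure_Bse μ hμ_inv hμ_norm j]
      rw [ENNReal.toReal_inv, ENNReal.toReal_pow, ENNReal.toReal_natCast, inv_pow]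
    -- pointwise decomposition
    have hg : ∀ t : ℤ_[p], (f t - 1) * ((‖t‖ ^ (-(α + 1)) : ℝ) : ℂ)
        = (f t - 1) + ∑ k ∈ Finset.range (m - 1),
            (((E * p) ^ (k + 1) - (E * p) ^ k : ℝ) : ℂ) *
              (Bse p (k + 1)).indicator (fun s => f s - 1) t := by
      intro t
      by_cases hft : f t = 1
      · have hz : ∀ k : ℕ, (Bse p (k + 1)).indicator (fun s => f s - 1) t = 0 := by
          intro k
          by_cases h : t ∈ Bse p (k + 1) <;> simp [Set.indicator_apply, h, hft]
        simp only [hz, hft, sub_self, zero_mul, mul_zero, Finset.sum_const_zero, add_zero]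
      · have ht0 : t ≠ 0 := by
          intro h
          apply hft
          rw [hf_def, h]
          apply (he_ker _).2
          push_cast
          simp
        set n : ℕ := t.valuation with hn_def
        have hn_int : (n : ℤ) = t.valuation := rfl
        have hnt : ‖t‖ = (p : ℝ) ^ (-(n : ℤ)) := by
          rw [PadicInt.norm_eq_zpow_neg_valuation ht0, hn_int]
        have hnm : n < m := by
          by_contra h
          push_neg at h
          apply hft
          apply hfBse
          rw [mem_Bse, hnt]
          apply zpow_le_zpow_right₀ hp1.le
          omega
        have hmem : ∀ k : ℕ, t ∈ Bse p k ↔ k ≤ n := by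
          intro k
          rw [mem_Bse, hnt, zpow_le_zpow_iff_right₀ hp1, neg_le_neg_iff]
          exact_mod_cast Iff.rfl
        have hX : ((‖t‖ ^ (-(α + 1)) : ℝ)) = (E * p) ^ n := by
          rw [hnt, ← Real.rpow_intCast (p : ℝ) (-(n : ℤ)), ← Real.rpow_mul hp0.le,
            show ((-(n : ℤ) : ℤ) : ℝ) * (-(α + 1)) = (α + 1) * (n : ℝ) by push_cast; ring,
            Real.rpow_mul hp0.le, Real.rpow_natCast, hA]
        have hsum2 : ∑ k ∈ Finset.range (m - 1),
            (((E * p) ^ (k + 1) - (E * p) ^ k : ℝ) : ℂ) *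
              (Bse p (k + 1)).indicator (fun s => f s - 1) t
            = ∑ k ∈ Finset.range n,
            (((E * p) ^ (k + 1) - (E * p) ^ k : ℝ) : ℂ) * (f t - 1) := by
          rw [← Finset.sum_subset (Finset.range_subset_range.2 (by omega : n ≤ m - 1))]
          · apply Finset.sum_congr rfl
            intro k hk
            rw [Set.indicator_of_mem ((hmem (k + 1)).2 (by
              have := Finset.mem_range.1 hk; omega))]
          · intro k hk hkn
            rw [Set.indicator_of_notMem, mul_zero]
            intro hmem'
            have := (hmem (k + 1)).1 hmem'
            have := Finset.mem_range.1 hk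
            simp only [Finset.mem_range] at hkn
            omega
        rw [hsum2, ← Finset.sum_mul]
        have hts : ∑ k ∈ Finset.range n, (((E * p) ^ (k + 1) - (E * p) ^ k : ℝ) : ℂ)
            = (((E * p) ^ n - 1 : ℝ) : ℂ) := by
          push_cast
          rw [Finset.sum_range_sub (fun k => ((E : ℂ) * (p : ℂ)) ^ k)]
          simp
        rw [hts, hX]
        push_cast
        ring
    -- integrability of pieces
    have hind_int : ∀ k : ℕ, Integrable ((Bse p (k + 1)).indicator (fun s => f s - 1)) μ :=
      fun k => ((hf_int.sub (integrable_const 1)).indicator (Bse_meas _))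
    have hfm1_int : Integrable (fun t => f t - 1) μ := hf_int.sub (integrable_const 1)
    -- value of ∫ f
    have hint_f : ∫ t, f t ∂μ = 0 := by
      have h0 : ∫ t, f t ∂μ = ∫ t, (Bse p 0).indicator f t ∂μ := by
        rw [Bse_zero]
        simp
      rw [h0, hvanish 0 (by omega)]
    -- value of indicator integrals
    have hindval : ∀ k : ℕ, k < m - 1 →
        ∫ t, (Bse p (k + 1)).indicator (fun s => f s - 1) t ∂μ
          = Complex.ofReal (-(((p : ℝ)⁻¹) ^ (k + 1))) := by
      intro k hk
      have hsplit : (fun t => (Bse p (k + 1)).indicator (fun s => f s - 1) t)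
          = fun t => (Bse p (k + 1)).indicator f t
              - (Bse p (k + 1)).indicator (fun _ => (1 : ℂ)) t := by
        funext t
        by_cases h : t ∈ Bse p (k + 1) <;> simp [Set.indicator_apply, h]
      rw [hsplit,
        integral_sub (hf_int.indicator (Bse_meas _)) ((integrable_const 1).indicator (Bse_meas _)),
        hvanish (k + 1) (by omega), MeasureTheory.integral_indicator_const _ (Bse_meas _), measureReal_def, hμB]
      push_cast [Complex.real_smul]
      ring
    -- computing the integral
    have hI : ∫ t : ℤ_[p], (f t - 1) * ((‖t‖ ^ (-(α + 1)) : ℝ) : ℂ) ∂μ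
        = Complex.ofReal (-1 - ∑ k ∈ Finset.range (m - 1),
            ((E * p) ^ (k + 1) - (E * p) ^ k) * ((p : ℝ)⁻¹) ^ (k + 1)) := by
      rw [integral_congr_ae (Filter.Eventually.of_forall hg)]
      rw [integral_add hfm1_int
        (integrable_finset_sum _ fun k _ => ((hind_int k).const_mul _))]
      rw [integral_finset_sum _ fun k _ => ((hind_int k).const_mul _)]
      simp only [MeasureTheory.integral_const_mul]
      rw [integral_sub hf_int (integrable_const 1), hint_f, integral_const]
      rw [Finset.sum_congr rfl fun k hk => by rw [hindval k (Finset.mem_range.1 hk)]]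
      simp only [measureReal_def, measure_univ, ENNReal.toReal_one, one_smul]
      push_cast
      simp only [mul_neg, Finset.sum_neg_distrib]
      ring
    rw [hI]
    -- the final identity
    have hEm : ‖S‖ ^ α = E ^ m := by
      rw [hnormS, hE_def, ← Real.rpow_natCast (p : ℝ) m, ← Real.rpow_mul hp0.le, mul_comm,
        Real.rpow_mul hp0.le, Real.rpow_natCast]
    have hid := vt_real_identity hE1 hp1 (m - 1)
    rw [show m - 1 + 1 = m by omega] at hid
    rw [hQ, hEm, ← hid]
    push_cast
    ring
end

section
/- Let p be an odd prime. For a,b ∈ ℚₚ with |a|ₚ > 1 and |b/a|ₚ ≤ 1, the Gaussian integral ∫_{ℤₚ} e^{2πi{au²+bu}ₚ} du has absolute value |a|ₚ^{−1/2}. -/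
open MeasureTheory
open scoped Classical ENNReal

section GaussHelpers

variable {p : ℕ} [hpp : Fact p.Prime] (e : ℚ_[p] → ℂ)
  (he_add : ∀ x y, e (x + y) = e x * e y)
  (he_abs : ∀ x, ‖e x‖ = 1)
  (he_ker : ∀ x, e x = 1 ↔ ‖x‖ ≤ 1)

include he_abs in
lemma aux_e_ne_zero (x : ℚ_[p]) : e x ≠ 0 := by
  intro h
  have := he_abs x
  rw [h] at this
  simp at this

include he_add he_abs in
lemma aux_e_zero : e 0 = 1 := by
  have h := he_add 0 0
  rw [add_zero] at h
  have := aux_e_ne_zero e he_abs 0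
  field_simp at h
  exact h.symm

include he_add he_ker in
lemma aux_e_cong {x y : ℚ_[p]} (h : ‖x - y‖ ≤ 1) : e x = e y := by
  have hx : e x = e y * e (x - y) := by rw [← he_add]; ring_nf
  rw [hx, (he_ker (x - y)).mpr h, mul_one]

include he_add he_abs in
lemma aux_e_conj (x : ℚ_[p]) : (starRingEnd ℂ) (e x) = e (-x) := by
  have h1 : e x * e (-x) = 1 := by
    rw [← he_add]; simp [aux_e_zero e he_add he_abs]
  have h2 : e x * (starRingEnd ℂ) (e x) = 1 := by
    rw [Complex.mul_conj]
    norm_cast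
    rw [← Complex.sq_norm, he_abs]; norm_num
  have h3 := inv_eq_of_mul_eq_one_right h2
  have h4 := inv_eq_of_mul_eq_one_right h1
  rw [← h3, h4]

end GaussHelpers

/-- for an odd prime `p` and `a, b ∈ ℚₚ` with `|a|ₚ > 1` and
`|b/a|ₚ ≤ 1`, the p-adic Gaussian integral `∫_{ℤₚ} e^{2πi{au²+bu}ₚ} du` has
absolute value `|a|ₚ^{−1/2}`. -/
theorem padic_gaussian_integral_abs (p : ℕ) [Fact p.Prime] (hp : Odd p)
    [MeasurableSpace ℤ_[p]] [BorelSpace ℤ_[p]]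
    (μ : Measure ℤ_[p])
    (hμ_inv : ∀ (a : ℤ_[p]) (s : Set ℤ_[p]), μ ((a + ·) ⁻¹' s) = μ s)
    (hμ_norm : μ Set.univ = 1)
    (e : ℚ_[p] → ℂ)
    (he_add : ∀ x y, e (x + y) = e x * e y)
    (he_abs : ∀ x, ‖e x‖ = 1)
    (he_ker : ∀ x, e x = 1 ↔ ‖x‖ ≤ 1)
    (a b : ℚ_[p]) (ha : 1 < ‖a‖) (hba : ‖b / a‖ ≤ 1) :
    ‖∫ u : ℤ_[p], e (a * (u : ℚ_[p]) ^ 2 + b * (u : ℚ_[p])) ∂μ‖ =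
      ‖a‖ ^ (-(1 / 2 : ℝ)) := by
  have hprime : p.Prime := Fact.out
  have hp1 : (1 : ℝ) < p := by exact_mod_cast hprime.one_lt
  have hppos : (0 : ℝ) < p := by positivity
  have ha0 : a ≠ 0 := by
    intro h; rw [h] at ha; simp at ha; linarith
  -- get k with ‖a‖ = p ^ k, 1 ≤ k
  obtain ⟨k, hk1, hka⟩ : ∃ k : ℕ, 1 ≤ k ∧ ‖a‖ = (p : ℝ) ^ (k : ℤ) := by
    rw [Padic.norm_eq_zpow_neg_valuation ha0] at ha ⊢
    have hv : 0 < -a.valuation := by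
      by_contra h
      push_neg at h
      have : (p : ℝ) ^ (-a.valuation) ≤ 1 := zpow_le_one_of_nonpos₀ hp1.le h
      linarith
    exact ⟨(-a.valuation).toNat, by omega, by rw [Int.toNat_of_nonneg hv.le]⟩
  set N : ℕ := p ^ k with hN
  haveI : NeZero N := ⟨pow_ne_zero k hprime.pos.ne'⟩
  have hNpos : 0 < N := Nat.pos_of_ne_zero (NeZero.ne N)
  have hN1 : 1 < N := by
    have : p ^ 1 ≤ p ^ k := Nat.pow_le_pow_right hprime.pos hk1
    have hp2 : 2 ≤ p := hprime.two_le
    simp only [pow_one] at this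
    omega
  haveI : Fact (1 < N) := ⟨hN1⟩
  have hNR : ((N : ℝ)) = (p : ℝ) ^ (k : ℤ) := by
    rw [hN]; push_cast; rw [zpow_natCast]
  have hNRpos : (0 : ℝ) < N := by exact_mod_cast hNpos
  have hb : ‖b‖ ≤ ‖a‖ := by
    rcases eq_or_ne b 0 with hb0 | hb0
    · rw [hb0]; simp
    · rw [norm_div] at hba
      rw [div_le_one (by positivity)] at hba
      exact hba
  -- basic norm arithmetic
  have hpk_mul : (p : ℝ) ^ (-(k : ℤ)) * (p : ℝ) ^ (k : ℤ) = 1 := by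
    rw [← zpow_add₀ (by positivity : (p : ℝ) ≠ 0)]; simp
  have key_mul : ∀ z t : ℚ_[p], ‖z‖ ≤ (p : ℝ) ^ (-(k : ℤ)) → ‖t‖ ≤ (p : ℝ) ^ (k : ℤ) →
      ‖z * t‖ ≤ 1 := by
    intro z t hz ht
    rw [norm_mul]
    calc ‖z‖ * ‖t‖ ≤ (p : ℝ) ^ (-(k : ℤ)) * (p : ℝ) ^ (k : ℤ) :=
          mul_le_mul hz ht (norm_nonneg _) (by positivity)
      _ = 1 := hpk_mul
  -- the quadratic phase is locally constant
  have quad_cong : ∀ x y : ℚ_[p], ‖x‖ ≤ 1 → ‖y‖ ≤ 1 → ‖x - y‖ ≤ (p : ℝ) ^ (-(k : ℤ)) →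
      e (a * x ^ 2 + b * x) = e (a * y ^ 2 + b * y) := by
    intro x y hx hy hxy
    apply aux_e_cong e he_add he_ker
    have hre : a * x ^ 2 + b * x - (a * y ^ 2 + b * y) = (x - y) * (a * (x + y) + b) := by
      ring
    rw [hre]
    apply key_mul _ _ hxy
    refine le_trans (Padic.nonarchimedean _ _) (max_le ?_ ?_)
    · rw [norm_mul]
      calc ‖a‖ * ‖x + y‖ ≤ ‖a‖ * 1 := by
            refine mul_le_mul_of_nonneg_left ?_ (norm_nonneg a)
            exact le_trans (Padic.nonarchimedean _ _) (max_le hx hy)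
        _ = (p : ℝ) ^ (k : ℤ) := by rw [mul_one, hka]
    · rw [← hka]; exact hb
  have nat_norm_le_one : ∀ m : ℕ, ‖(m : ℚ_[p])‖ ≤ 1 := by
    intro m
    have hmc : ((m : ℕ) : ℚ_[p]) = ((m : ℤ) : ℚ_[p]) := by push_cast; ring
    rw [hmc]; exact Padic.norm_int_le_one m
  have int_norm_le : ∀ m : ℤ, ((N : ℤ) ∣ m) → ‖(m : ℚ_[p])‖ ≤ (p : ℝ) ^ (-(k : ℤ)) := by
    intro m hm
    refine (Padic.norm_int_le_pow_iff_dvd m k).mpr ?_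
    rwa [hN, Nat.cast_pow] at hm
  have quad_cong_nat : ∀ m m' : ℕ, ((N : ℤ) ∣ (m : ℤ) - (m' : ℤ)) →
      e (a * (m : ℚ_[p]) ^ 2 + b * m) = e (a * (m' : ℚ_[p]) ^ 2 + b * m') := by
    intro m m' hmm
    apply quad_cong _ _ (nat_norm_le_one m) (nat_norm_le_one m')
    have hcast : ((m : ℚ_[p]) - m') = (((m : ℤ) - (m' : ℤ) : ℤ) : ℚ_[p]) := by push_cast; ring
    rw [hcast]
    exact int_norm_le _ hmm
  have char_cong : ∀ c : ℚ_[p], ‖c‖ ≤ (p : ℝ) ^ (k : ℤ) → ∀ m m' : ℕ,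
      ((N : ℤ) ∣ (m : ℤ) - (m' : ℤ)) → e (c * m) = e (c * m') := by
    intro c hc m m' hmm
    apply aux_e_cong e he_add he_ker
    have hcast : c * m - c * m' = (((m : ℤ) - (m' : ℤ) : ℤ) : ℚ_[p]) * c := by push_cast; ring
    rw [hcast]
    exact key_mul _ _ (int_norm_le _ hmm) hc
  have hval_dvd : ∀ x y : ZMod N, ((N : ℤ) ∣ ((x + y).val : ℤ) - ((x.val + y.val : ℕ) : ℤ)) := by
    intro x y
    rw [ZMod.val_add x y]
    exact dvd_sub_comm.mp (Nat.mod_modEq (x.val + y.val) N).dvd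
  -- the Gauss sum over ZMod N
  set G : ZMod N → ℂ := fun x => e (a * (x.val : ℚ_[p]) ^ 2 + b * (x.val : ℚ_[p])) with hG
  set S : ℂ := ∑ x : ZMod N, G x with hS
  -- key multiplicative identity
  have G_mul : ∀ w y : ZMod N, G (w + y) * (starRingEnd ℂ) (G y) =
      e (a * (w.val : ℚ_[p]) ^ 2 + b * w.val) * e (2 * a * w.val * y.val) := by
    intro w y
    have h1 : G (w + y) = e (a * ((w.val + y.val : ℕ) : ℚ_[p]) ^ 2 + b * (w.val + y.val : ℕ)) :=
      quad_cong_nat _ _ (hval_dvd w y)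
    have h2 : (starRingEnd ℂ) (G y) = e (-(a * (y.val : ℚ_[p]) ^ 2 + b * y.val)) :=
      aux_e_conj e he_add he_abs _
    rw [h1, h2, ← he_add, ← he_add]
    congr 1
    push_cast
    ring
  have hT0 : (∑ y : ZMod N, e (2 * a * ((0 : ZMod N).val : ℚ_[p]) * y.val)) = (N : ℂ) := by
    have : ∀ y : ZMod N, e (2 * a * ((0 : ZMod N).val : ℚ_[p]) * y.val) = 1 := by
      intro y
      rw [ZMod.val_zero]
      push_cast
      rw [mul_zero, zero_mul]
      exact aux_e_zero e he_add he_abs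
    rw [Finset.sum_congr rfl (fun y _ => this y)]
    simp [ZMod.card]
  have hTne : ∀ w : ZMod N, w ≠ 0 →
      (∑ y : ZMod N, e (2 * a * (w.val : ℚ_[p]) * y.val)) = 0 := by
    intro w hw
    set c : ℚ_[p] := 2 * a * (w.val : ℚ_[p]) with hc
    have h2norm : ‖(2 : ℚ_[p])‖ = 1 := by
      have h2cast : ((2 : ℤ) : ℚ_[p]) = (2 : ℚ_[p]) := by push_cast; ring
      rw [← h2cast]
      refine le_antisymm (Padic.norm_int_le_one 2) ?_
      by_contra hlt
      push_neg at hlt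
      have := (Padic.norm_intCast_lt_one_iff (k := 2)).mp hlt
      have hple : (p : ℤ) ≤ 2 := Int.le_of_dvd (by norm_num) this
      have hp2 : 2 ≤ p := hprime.two_le
      have hpeq : p = 2 := by omega
      rw [hpeq] at hp
      simp [Nat.odd_iff] at hp
    have hwval : w.val ≠ 0 := fun h => hw ((ZMod.val_eq_zero w).mp h)
    have hwlt : w.val < N := ZMod.val_lt w
    have hndvd : ¬ ((N : ℤ) ∣ (w.val : ℤ)) := by
      intro hdvd
      have : (N : ℤ) ≤ (w.val : ℤ) := Int.le_of_dvd (by exact_mod_cast hwval.bot_lt) hdvd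
      omega
    have hwnorm : (p : ℝ) ^ (-(k : ℤ)) < ‖(w.val : ℚ_[p])‖ := by
      by_contra hle
      push_neg at hle
      have := (Padic.norm_int_le_pow_iff_dvd (w.val : ℤ) k).mp (by exact_mod_cast hle)
      have hNZ : (N : ℤ) = (p : ℤ) ^ k := by rw [hN]; push_cast; ring
      exact hndvd (hNZ ▸ this)
    have hc_le : ‖c‖ ≤ (p : ℝ) ^ (k : ℤ) := by
      rw [hc, norm_mul, norm_mul, h2norm, one_mul, ← hka]
      calc ‖a‖ * ‖(w.val : ℚ_[p])‖ ≤ ‖a‖ * 1 :=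
            mul_le_mul_of_nonneg_left (nat_norm_le_one _) (norm_nonneg a)
        _ = ‖a‖ := mul_one _
    have hc_gt : 1 < ‖c‖ := by
      rw [hc, norm_mul, norm_mul, h2norm, one_mul, hka]
      calc (1 : ℝ) = (p : ℝ) ^ (k : ℤ) * (p : ℝ) ^ (-(k : ℤ)) := by
            rw [mul_comm]; exact hpk_mul.symm
        _ < (p : ℝ) ^ (k : ℤ) * ‖(w.val : ℚ_[p])‖ :=
            mul_lt_mul_of_pos_left hwnorm (by positivity)
    have hec : e c ≠ 1 := by
      intro h
      have := (he_ker c).mp h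
      linarith
    have hshift : (∑ y : ZMod N, e (c * y.val)) =
        (∑ y : ZMod N, e (c * ((y + 1 : ZMod N).val : ℚ_[p]))) := by
      exact (Fintype.sum_equiv (Equiv.addRight (1 : ZMod N)) _ _ (fun y => rfl)).symm
    have hstep : ∀ y : ZMod N, e (c * ((y + 1 : ZMod N).val : ℚ_[p])) = e (c * y.val) * e c := by
      intro y
      have h1 : e (c * ((y + 1 : ZMod N).val : ℚ_[p])) = e (c * ((y.val + 1 : ℕ) : ℚ_[p])) := by
        refine char_cong c hc_le _ _ ?_
        have := hval_dvd y 1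
        rwa [ZMod.val_one] at this
      rw [h1]
      have h2 : c * ((y.val + 1 : ℕ) : ℚ_[p]) = c * y.val + c := by push_cast; ring
      rw [h2, he_add]
    have : (∑ y : ZMod N, e (c * y.val)) = (∑ y : ZMod N, e (c * y.val)) * e c := by
      conv_lhs => rw [hshift]
      rw [Finset.sum_congr rfl (fun y _ => hstep y), ← Finset.sum_mul]
    have hz : (∑ y : ZMod N, e (c * y.val)) * (e c - 1) = 0 := by
      rw [mul_sub, mul_one, ← this, sub_self]
    rcases mul_eq_zero.mp hz with h | h
    · exact h
    · exact absurd (sub_eq_zero.mp h) hec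
  -- |S|² = N
  have hSS : S * (starRingEnd ℂ) S = (N : ℂ) := by
    rw [hS, map_sum, Finset.sum_mul_sum]
    have step1 : ∀ y : ZMod N, (∑ x : ZMod N, G x * (starRingEnd ℂ) (G y)) =
        ∑ w : ZMod N, G (w + y) * (starRingEnd ℂ) (G y) := by
      intro y
      exact (Fintype.sum_equiv (Equiv.addRight y) _ _ (fun w => rfl)).symm
    rw [Finset.sum_comm]
    calc (∑ y : ZMod N, ∑ x : ZMod N, G x * (starRingEnd ℂ) (G y))
        = ∑ y : ZMod N, ∑ w : ZMod N, G (w + y) * (starRingEnd ℂ) (G y) :=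
          Finset.sum_congr rfl (fun y _ => step1 y)
      _ = ∑ w : ZMod N, ∑ y : ZMod N,
            e (a * (w.val : ℚ_[p]) ^ 2 + b * w.val) * e (2 * a * w.val * y.val) := by
          rw [Finset.sum_comm]
          exact Finset.sum_congr rfl (fun w _ => Finset.sum_congr rfl (fun y _ => G_mul w y))
      _ = ∑ w : ZMod N, e (a * (w.val : ℚ_[p]) ^ 2 + b * w.val) *
            ∑ y : ZMod N, e (2 * a * w.val * y.val) := by
          exact Finset.sum_congr rfl (fun w _ => (Finset.mul_sum _ _ _).symm)
      _ = (N : ℂ) := by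
          rw [Fintype.sum_eq_single (0 : ZMod N)
            (fun w hw => by rw [hTne w hw, mul_zero])]
          have h0 : a * (((0 : ℕ) : ℚ_[p])) ^ 2 + b * ((0 : ℕ) : ℚ_[p]) = 0 := by
            push_cast; ring
          rw [hT0, ZMod.val_zero, h0, aux_e_zero e he_add he_abs, one_mul]
  have habsS : ‖S‖ = Real.sqrt N := by
    have h1 : (Complex.normSq S : ℂ) = (N : ℂ) := by rw [← Complex.mul_conj]; exact hSS
    have h2 : Complex.normSq S = (N : ℝ) := by exact_mod_cast h1
    rw [Complex.norm_def, h2]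
  -- the partition of ℤ_[p] into N balls
  set B : ℕ → Set ℤ_[p] := fun n => {u : ℤ_[p] | ‖u - (n : ℤ_[p])‖ ≤ (p : ℝ) ^ (-(k : ℤ))}
    with hB
  have hBmeas : ∀ n, MeasurableSet (B n) := by
    intro n
    have : B n = Metric.closedBall ((n : ℤ_[p])) ((p : ℝ) ^ (-(k : ℤ))) := by
      ext u
      simp [hB, Metric.mem_closedBall, dist_eq_norm]
    rw [this]
    exact Metric.isClosed_closedBall.measurableSet
  have hmem_appr : ∀ u : ℤ_[p], u ∈ B (u.appr k) := by
    intro u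
    have := PadicInt.appr_spec k u
    rw [hB]
    simp only [Set.mem_setOf_eq]
    rw [PadicInt.norm_le_pow_iff_mem_span_pow]
    exact this
  have hdisj : ∀ m n : ℕ, m < N → n < N → ∀ u : ℤ_[p], u ∈ B m → u ∈ B n → m = n := by
    intro m n hm hn u hum hun
    have hmn : ‖((m : ℤ_[p])) - (n : ℤ_[p])‖ ≤ (p : ℝ) ^ (-(k : ℤ)) := by
      simp only [hB, Set.mem_setOf_eq] at hum hun
      have hsub : ((m : ℤ_[p])) - n = (u - n) + (-(u - m)) := by ring
      rw [hsub]
      refine le_trans (PadicInt.nonarchimedean _ _) (max_le hun ?_)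
      rw [norm_neg]
      exact hum
    have hcast : ((m : ℤ_[p])) - n = (((m : ℤ) - n : ℤ) : ℤ_[p]) := by push_cast; ring
    rw [hcast] at hmn
    have hdvd : (p : ℤ) ^ k ∣ ((m : ℤ) - n) := PadicInt.norm_int_le_pow_iff_dvd.mp hmn
    have habs : |((m : ℤ) - n)| < (p : ℤ) ^ k := by
      have hNZ : (p : ℤ) ^ k = (N : ℤ) := by rw [hN]; push_cast; ring
      rw [abs_lt, hNZ]
      omega
    have := Int.eq_zero_of_abs_lt_dvd hdvd habs
    omega
  -- the integrand as a finite sum of indicators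
  set c : ℕ → ℂ := fun n => e (a * (n : ℚ_[p]) ^ 2 + b * (n : ℚ_[p])) with hc
  have hf_eq : ∀ u : ℤ_[p], e (a * (u : ℚ_[p]) ^ 2 + b * (u : ℚ_[p])) =
      ∑ n ∈ Finset.range N, (B n).indicator (fun _ => c n) u := by
    intro u
    set n₀ := u.appr k with hn₀
    have hn₀N : n₀ < N := PadicInt.appr_lt u k
    have hn₀mem : n₀ ∈ Finset.range N := Finset.mem_range.mpr hn₀N
    rw [Finset.sum_eq_single_of_mem n₀ hn₀mem]
    · rw [Set.indicator_of_mem (hmem_appr u)]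
      rw [hc]
      refine quad_cong _ _ (PadicInt.norm_le_one u) (by simpa using nat_norm_le_one n₀) ?_
      have h1 : ((u : ℚ_[p]) - (n₀ : ℚ_[p])) = (((u - (n₀ : ℤ_[p])) : ℤ_[p]) : ℚ_[p]) := by
        push_cast; ring
      rw [h1]
      have := hmem_appr u
      rw [hB] at this
      exact this
    · intro m hm hmne
      rw [Set.indicator_of_notMem]
      intro humem
      exact hmne (hdisj m n₀ (Finset.mem_range.mp hm) hn₀N u humem (hmem_appr u))
  -- measure of each ball
  haveI hfin : IsFiniteMeasure μ := ⟨by rw [hμ_norm]; exact ENNReal.one_lt_top⟩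
  have hμB : ∀ n : ℕ, μ (B n) = μ (B 0) := by
    intro n
    have hpre : ((((n : ℤ_[p])) + ·) ⁻¹' (B n)) = B 0 := by
      ext u
      simp only [hB, Set.mem_preimage, Set.mem_setOf_eq]
      constructor
      · intro h; simpa using h
      · intro h; simpa using h
    have := hμ_inv (n : ℤ_[p]) (B n)
    rw [hpre] at this
    exact this.symm
  have hcover : (⋃ n ∈ Finset.range N, B n) = Set.univ := by
    ext u
    simp only [Set.mem_iUnion, Set.mem_univ, iff_true]
    exact ⟨u.appr k, Finset.mem_range.mpr (PadicInt.appr_lt u k), hmem_appr u⟩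
  have hsum_meas : ∑ n ∈ Finset.range N, μ (B n) = 1 := by
    rw [← measure_biUnion_finset ?_ (fun n _ => hBmeas n), hcover, hμ_norm]
    · intro m hm n hn hmn
      simp only [Finset.coe_range, Set.mem_Iio] at hm hn
      refine Set.disjoint_left.mpr (fun u hum hun => ?_)
      exact hmn (hdisj m n hm hn u hum hun)
  have hμB0 : μ (B 0) = (N : ℝ≥0∞)⁻¹ := by
    have h1 : ∑ n ∈ Finset.range N, μ (B n) = N * μ (B 0) := by
      rw [Finset.sum_congr rfl (fun n _ => hμB n)]
      simp [Finset.sum_const, nsmul_eq_mul]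
    rw [h1] at hsum_meas
    have hNne : (N : ℝ≥0∞) ≠ 0 := by exact_mod_cast hNpos.ne'
    have hNnetop : (N : ℝ≥0∞) ≠ ⊤ := ENNReal.natCast_ne_top N
    have h2 := congrArg (fun x => (N : ℝ≥0∞)⁻¹ * x) hsum_meas
    simp only [← mul_assoc, ENNReal.inv_mul_cancel hNne hNnetop, one_mul, mul_one] at h2
    exact h2
  have hμB0' : (μ (B 0)).toReal = (N : ℝ)⁻¹ := by
    rw [hμB0]
    simp
  -- compute the integral
  have hint : (∫ u : ℤ_[p], e (a * (u : ℚ_[p]) ^ 2 + b * (u : ℚ_[p])) ∂μ) =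
      (N : ℝ)⁻¹ • ∑ n ∈ Finset.range N, c n := by
    calc (∫ u : ℤ_[p], e (a * (u : ℚ_[p]) ^ 2 + b * (u : ℚ_[p])) ∂μ)
        = ∫ u : ℤ_[p], (∑ n ∈ Finset.range N, (B n).indicator (fun _ => c n) u) ∂μ := by
          exact integral_congr_ae (Filter.Eventually.of_forall hf_eq)
      _ = ∑ n ∈ Finset.range N, ∫ u : ℤ_[p], (B n).indicator (fun _ => c n) u ∂μ := by
          refine integral_finset_sum _ (fun n _ => ?_)
          exact (integrable_const (c n)).indicator (hBmeas n)
      _ = ∑ n ∈ Finset.range N, (μ (B n)).toReal • c n := by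
          refine Finset.sum_congr rfl (fun n _ => ?_)
          rw [integral_indicator_const (c n) (hBmeas n)]; rfl
      _ = (N : ℝ)⁻¹ • ∑ n ∈ Finset.range N, c n := by
          rw [Finset.smul_sum]
          refine Finset.sum_congr rfl (fun n _ => ?_)
          rw [hμB n, hμB0']
  -- range sum equals ZMod sum
  have hrange_zmod : ∑ n ∈ Finset.range N, c n = S := by
    rw [hS, hG]
    refine (Finset.sum_bij' (i := fun (x : ZMod N) (_ : x ∈ Finset.univ) => x.val)
      (j := fun (n : ℕ) (_ : n ∈ Finset.range N) => (n : ZMod N)) ?_ ?_ ?_ ?_ ?_).symm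
    · intro x _
      exact Finset.mem_range.mpr (ZMod.val_lt x)
    · intro n _
      exact Finset.mem_univ _
    · intro x _
      exact ZMod.natCast_rightInverse x
    · intro n hn
      exact ZMod.val_natCast_of_lt (Finset.mem_range.mp hn)
    · intro x _
      rfl
  -- final computation
  rw [hint, hrange_zmod]
  rw [Complex.real_smul, norm_mul, Complex.norm_real, Real.norm_eq_abs, habsS]
  rw [abs_of_pos (by positivity : (0 : ℝ) < (N : ℝ)⁻¹)]
  rw [hka, ← hNR]
  rw [Real.rpow_neg hNRpos.le, ← Real.sqrt_eq_rpow]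
  have hsqrt : Real.sqrt N * Real.sqrt N = N := Real.mul_self_sqrt hNRpos.le
  have hsqrtpos : 0 < Real.sqrt N := Real.sqrt_pos.mpr hNRpos
  field_simp
  rw [Real.sq_sqrt hNRpos.le]
end

section
/- Let p be an odd prime and a, b ∈ ℚₚ with |a|ₚ > 1 and |b/a|ₚ > 1. Then ∫_{ℤₚ} e^{2πi{au²+bu}ₚ} du = 0. -/
open MeasureTheory
open scoped Classical

/-- for an odd prime `p` and `a, b ∈ ℚₚ` with `|a|ₚ > 1` and
`|b/a|ₚ > 1`, the p-adic Gaussian integral `∫_{ℤₚ} e^{2πi{au²+bu}ₚ} du`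
vanishes. -/
theorem padic_gaussian_integral_zero (p : ℕ) [Fact p.Prime] (hp : Odd p)
    [MeasurableSpace ℤ_[p]] [BorelSpace ℤ_[p]]
    (μ : Measure ℤ_[p])
    (hμ_inv : ∀ (a : ℤ_[p]) (s : Set ℤ_[p]), μ ((a + ·) ⁻¹' s) = μ s)
    (hμ_norm : μ Set.univ = 1)
    (e : ℚ_[p] → ℂ)
    (he_add : ∀ x y, e (x + y) = e x * e y)
    (he_abs : ∀ x, ‖e x‖ = 1)
    (he_ker : ∀ x, e x = 1 ↔ ‖x‖ ≤ 1)
    (a b : ℚ_[p]) (ha : 1 < ‖a‖) (hba : 1 < ‖b / a‖) :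
    ∫ u : ℤ_[p], e (a * (u : ℚ_[p]) ^ 2 + b * (u : ℚ_[p])) ∂μ = 0 := by
  have hpb := Fact.out (p := p.Prime)
  have hp1 : (1:ℝ) < (p:ℝ) := by exact_mod_cast hpb.one_lt
  have ha0 : a ≠ 0 := by rintro rfl; simp at ha; linarith
  have hpne2 : p ≠ 2 := by rintro rfl; exact (by norm_num : ¬ Odd 2) hp
  have hval : a.valuation < 0 := by
    by_contra h
    push_neg at h
    rw [Padic.norm_eq_zpow_neg_valuation ha0] at ha
    have : ((p:ℝ)) ^ (-a.valuation) ≤ 1 :=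
      zpow_le_one_of_nonpos₀ (le_of_lt hp1) (by omega)
    linarith
  set n : ℕ := (-a.valuation).toNat with hn
  have hnz : (n : ℤ) = -a.valuation := Int.toNat_of_nonneg (by omega)
  set c : ℤ_[p] := (p : ℤ_[p]) ^ n with hc
  have hcq : ((c : ℚ_[p])) = (p : ℚ_[p]) ^ n := by push_cast [hc]; ring
  have hnormc : ‖(c:ℚ_[p])‖ = ((p:ℝ)) ^ (a.valuation) := by
    rw [hcq, norm_pow, Padic.norm_p, ← zpow_natCast, hnz]
    rw [inv_zpow, ← zpow_neg, neg_neg]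
  have hac : ‖a * (c:ℚ_[p])‖ = 1 := by
    rw [norm_mul, Padic.norm_eq_zpow_neg_valuation ha0, hnormc, ← zpow_add₀ (by positivity)]
    simp
  have hcle : ‖(c:ℚ_[p])‖ ≤ 1 := by
    rw [hnormc]
    exact zpow_le_one_of_nonpos₀ (le_of_lt hp1) (le_of_lt hval)
  have hbc : 1 < ‖b * (c:ℚ_[p])‖ := by
    have hb : b * (c:ℚ_[p]) = (b / a) * (a * (c:ℚ_[p])) := by field_simp
    rw [hb, norm_mul, hac, mul_one]; exact hba
  have h2 : ‖(2:ℚ_[p])‖ = 1 := by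
    have h1 : ‖(2:ℚ_[p])‖ ≤ 1 := by
      have : ((2:ℤ) : ℚ_[p]) = 2 := by norm_num
      rw [← this]; exact Padic.norm_int_le_one 2
    rcases lt_or_eq_of_le h1 with h | h
    · exfalso
      have h4 : ((2:ℤ) : ℚ_[p]) = 2 := by norm_num
      rw [← h4, Padic.norm_intCast_lt_one_iff] at h
      have h5 : p ∣ 2 := by exact_mod_cast h
      exact hpne2 ((Nat.prime_dvd_prime_iff_eq hpb Nat.prime_two).mp h5)
    · exact h
  -- key small-norm term
  have hsmall : ∀ u : ℤ_[p], ‖2 * a * (c:ℚ_[p]) * (u:ℚ_[p]) + a * (c:ℚ_[p])^2‖ ≤ 1 := by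
    intro u
    refine le_trans (Padic.nonarchimedean _ _) (max_le ?_ ?_)
    · rw [show 2 * a * (c:ℚ_[p]) * (u:ℚ_[p]) = (2:ℚ_[p]) * (a * (c:ℚ_[p])) * (u:ℚ_[p]) by ring,
        norm_mul, norm_mul, h2, hac, one_mul, one_mul]
      exact u.norm_le_one
    · rw [show a * (c:ℚ_[p])^2 = (a * (c:ℚ_[p])) * (c:ℚ_[p]) by ring, norm_mul, hac, one_mul]
      exact hcle
  -- translation is measure preserving
  have hTm : Measurable fun u : ℤ_[p] => c + u :=
    (continuous_const.add continuous_id).measurable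
  have hpres : MeasurePreserving (fun u : ℤ_[p] => c + u) μ μ := by
    refine ⟨hTm, ?_⟩
    ext s hs
    rw [Measure.map_apply hTm hs]
    exact hμ_inv c s
  have hemb : MeasurableEmbedding (fun u : ℤ_[p] => c + u) :=
    (Homeomorph.addLeft c).toMeasurableEquiv.measurableEmbedding
  set I := ∫ u : ℤ_[p], e (a * (u : ℚ_[p]) ^ 2 + b * (u : ℚ_[p])) ∂μ with hI
  have key : I = e (b * (c:ℚ_[p])) * I := by
    have h1 : I = ∫ u : ℤ_[p], e (a * ((c + u : ℤ_[p]) : ℚ_[p]) ^ 2 + b * ((c + u : ℤ_[p]) : ℚ_[p])) ∂μ :=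
      (hpres.integral_comp hemb (fun v : ℤ_[p] => e (a * (v:ℚ_[p])^2 + b * (v:ℚ_[p])))).symm
    have h2' : ∀ u : ℤ_[p],
        e (a * ((c + u : ℤ_[p]) : ℚ_[p]) ^ 2 + b * ((c + u : ℤ_[p]) : ℚ_[p]))
          = e (b * (c:ℚ_[p])) * e (a * (u:ℚ_[p])^2 + b * (u:ℚ_[p])) := by
      intro u
      have hcu : ((c + u : ℤ_[p]) : ℚ_[p]) = (c:ℚ_[p]) + (u:ℚ_[p]) := by push_cast; ring
      have hexp : a * ((c:ℚ_[p]) + (u:ℚ_[p])) ^ 2 + b * ((c:ℚ_[p]) + (u:ℚ_[p]))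
          = (b * (c:ℚ_[p])) + ((a * (u:ℚ_[p])^2 + b * (u:ℚ_[p])) + (2 * a * (c:ℚ_[p]) * (u:ℚ_[p]) + a * (c:ℚ_[p])^2)) := by ring
      rw [hcu, hexp, he_add, he_add, (he_ker _).mpr (hsmall u), mul_one]
    calc I = ∫ u : ℤ_[p], e (a * ((c + u : ℤ_[p]) : ℚ_[p]) ^ 2 + b * ((c + u : ℤ_[p]) : ℚ_[p])) ∂μ := h1
      _ = ∫ u : ℤ_[p], e (b * (c:ℚ_[p])) * e (a * (u:ℚ_[p])^2 + b * (u:ℚ_[p])) ∂μ := by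
            simp_rw [h2']
      _ = e (b * (c:ℚ_[p])) * I := integral_const_mul _ _
  have hne : e (b * (c:ℚ_[p])) ≠ 1 := by
    intro h
    have := (he_ker _).mp h
    linarith
  have hz : (e (b * (c:ℚ_[p])) - 1) * I = 0 := by
    rw [sub_mul, one_mul, sub_eq_zero]; exact key.symm
  rcases mul_eq_zero.mp hz with h | h
  · exact absurd (by rwa [sub_eq_zero] at h) hne
  · exact h
end
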